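/- arXiv:math/0212333 — 8 statements merged into one kernel-verified Lean document; each statement's English description precedes it below -/
import Mathlib

section
/- Let G be a group satisfying condition (𝒩,3): every subset of G with 4 elements contains two elements x, y such that ⟨x, y⟩ is nilpotent. Then for all x, y in G, the subgroup ⟨x, xʸ⟩ is nilpotent, where xʸ = y⁻¹xy. -/
/-- Condition (𝒩,3): every subset of `G` with 4 elements contains a pair generating
a nilpotent subgroup. -/
def CondN3 (G : Type*) [Group G] : Prop :=
  ∀ S : Finset G, S.card = 4 → ∃ x ∈ S, ∃ y ∈ S, x ≠ y ∧
    Group.IsNilpotent ↥(Subgroup.closure {x, y})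

lemma nilp_of_le {G : Type*} [Group G] {H K : Subgroup G} (hle : H ≤ K)
    (hK : Group.IsNilpotent ↥K) : Group.IsNilpotent ↥H := by
  haveI := hK
  exact nilpotent_of_surjective (Subgroup.subgroupOfEquivOfLe hle).toMonoidHom
    (Subgroup.subgroupOfEquivOfLe hle).surjective

lemma resolve {G : Type*} [Group G] {a c : G} {s : Set G}
    (ha : a ∈ Subgroup.closure s) (hc : c ∈ Subgroup.closure s)
    (hK : Group.IsNilpotent ↥(Subgroup.closure s)) :
    Group.IsNilpotent ↥(Subgroup.closure {a, c}) := by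
  refine nilp_of_le ((Subgroup.closure_le _).mpr ?_) hK
  intro z hz
  rcases hz with rfl | hz
  · exact ha
  · rcases hz with rfl; exact hc

theorem stmt_1 {G : Type*} [Group G] (h : CondN3 G) :
    ∀ x y : G, Group.IsNilpotent ↥(Subgroup.closure {x, y⁻¹ * x * y}) := by
  intro a b
  by_cases hfix : b⁻¹ * a * b = a
  · rw [hfix, Set.pair_eq_singleton, ← Subgroup.zpowers_eq_closure]
    open IsMulCommutative in infer_instance
  · -- the four elements p = b⁻¹a, q = b, r = b⁻¹ab, s = a are pairwise distinct
    have h1 : b⁻¹ * a ≠ b := by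
      intro e
      apply hfix
      have ha2 : a = b * b := by
        have := congrArg (fun z => b * z) e
        simpa [mul_assoc] using this
      rw [ha2]; group
    have h2 : b⁻¹ * a ≠ b⁻¹ * a * b := by
      intro e
      apply hfix
      have hb : (b⁻¹ * a) * 1 = (b⁻¹ * a) * b := by rw [mul_one]; exact e
      have hb1 : (1 : G) = b := mul_left_cancel hb
      rw [← hb1]; group
    have h3 : b⁻¹ * a ≠ a := by
      intro e
      apply hfix
      have hb : b⁻¹ * a = 1 * a := by rw [one_mul]; exact e
      have hb1 : b⁻¹ = 1 := mul_right_cancel hb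
      have hb2 : b = 1 := by rw [← inv_inv b, hb1]; group
      rw [hb2]; group
    have h4 : b ≠ b⁻¹ * a * b := by
      intro e
      apply hfix
      have hb : 1 * b = (b⁻¹ * a) * b := by rw [one_mul]; exact e
      have hb1 : (1 : G) = b⁻¹ * a := mul_right_cancel hb
      have hb2 : a = b := by
        have := congrArg (fun z => b * z) hb1
        simpa [mul_assoc] using this.symm
      rw [hb2]; group
    have h5 : b ≠ a := by
      intro e
      apply hfix
      rw [← e]; group
    have h6 : b⁻¹ * a * b ≠ a := hfix
    letI := Classical.decEq G
    have hcard : ({b⁻¹ * a, b, b⁻¹ * a * b, a} : Finset G).card = 4 := by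
      rw [Finset.card_insert_of_notMem (by simp [h1, h2, h3]),
        Finset.card_insert_of_notMem (by simp [h4, h5]),
        Finset.card_insert_of_notMem (by simp [h6]),
        Finset.card_singleton]
    obtain ⟨x, hx, y, hy, hxy, hnil⟩ := h _ hcard
    simp only [Finset.mem_insert, Finset.mem_singleton] at hx hy
    rcases hx with hx | hx | hx | hx <;> rcases hy with hy | hy | hy | hy <;>
      rw [hx, hy] at hnil hxy
    -- x = p
    · exact absurd rfl hxy
    · -- (p, q)
      have hp : b⁻¹ * a ∈ Subgroup.closure {b⁻¹ * a, b} :=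
        Subgroup.subset_closure (by simp)
      have hb : b ∈ Subgroup.closure {b⁻¹ * a, b} :=
        Subgroup.subset_closure (by simp)
      have ha : a ∈ Subgroup.closure {b⁻¹ * a, b} := by
        simpa [mul_assoc] using mul_mem hb hp
      exact resolve ha (mul_mem (mul_mem (inv_mem hb) ha) hb) hnil
    · -- (p, r)
      have hp : b⁻¹ * a ∈ Subgroup.closure {b⁻¹ * a, b⁻¹ * a * b} :=
        Subgroup.subset_closure (by simp)
      have hr : b⁻¹ * a * b ∈ Subgroup.closure {b⁻¹ * a, b⁻¹ * a * b} :=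
        Subgroup.subset_closure (by simp)
      have hb : b ∈ Subgroup.closure {b⁻¹ * a, b⁻¹ * a * b} := by
        simpa [mul_assoc] using mul_mem (inv_mem hp) hr
      have ha : a ∈ Subgroup.closure {b⁻¹ * a, b⁻¹ * a * b} := by
        simpa [mul_assoc] using mul_mem hb hp
      exact resolve ha hr hnil
    · -- (p, s)
      have hp : b⁻¹ * a ∈ Subgroup.closure {b⁻¹ * a, a} :=
        Subgroup.subset_closure (by simp)
      have ha : a ∈ Subgroup.closure {b⁻¹ * a, a} :=
        Subgroup.subset_closure (by simp)
      have hb : b ∈ Subgroup.closure {b⁻¹ * a, a} := by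
        simpa [mul_assoc] using mul_mem ha (inv_mem hp)
      exact resolve ha (mul_mem (mul_mem (inv_mem hb) ha) hb) hnil
    -- x = q
    · -- (q, p)
      have hp : b⁻¹ * a ∈ Subgroup.closure {b, b⁻¹ * a} :=
        Subgroup.subset_closure (by simp)
      have hb : b ∈ Subgroup.closure {b, b⁻¹ * a} :=
        Subgroup.subset_closure (by simp)
      have ha : a ∈ Subgroup.closure {b, b⁻¹ * a} := by
        simpa [mul_assoc] using mul_mem hb hp
      exact resolve ha (mul_mem (mul_mem (inv_mem hb) ha) hb) hnil
    · exact absurd rfl hxy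
    · -- (q, r)
      have hb : b ∈ Subgroup.closure {b, b⁻¹ * a * b} :=
        Subgroup.subset_closure (by simp)
      have hr : b⁻¹ * a * b ∈ Subgroup.closure {b, b⁻¹ * a * b} :=
        Subgroup.subset_closure (by simp)
      have ha : a ∈ Subgroup.closure {b, b⁻¹ * a * b} := by
        simpa [mul_assoc] using mul_mem (mul_mem hb hr) (inv_mem hb)
      exact resolve ha hr hnil
    · -- (q, s)
      have hb : b ∈ Subgroup.closure {b, a} :=
        Subgroup.subset_closure (by simp)
      have ha : a ∈ Subgroup.closure {b, a} :=
        Subgroup.subset_closure (by simp)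
      exact resolve ha (mul_mem (mul_mem (inv_mem hb) ha) hb) hnil
    -- x = r
    · -- (r, p)
      have hp : b⁻¹ * a ∈ Subgroup.closure {b⁻¹ * a * b, b⁻¹ * a} :=
        Subgroup.subset_closure (by simp)
      have hr : b⁻¹ * a * b ∈ Subgroup.closure {b⁻¹ * a * b, b⁻¹ * a} :=
        Subgroup.subset_closure (by simp)
      have hb : b ∈ Subgroup.closure {b⁻¹ * a * b, b⁻¹ * a} := by
        simpa [mul_assoc] using mul_mem (inv_mem hp) hr
      have ha : a ∈ Subgroup.closure {b⁻¹ * a * b, b⁻¹ * a} := by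
        simpa [mul_assoc] using mul_mem hb hp
      exact resolve ha hr hnil
    · -- (r, q)
      have hb : b ∈ Subgroup.closure {b⁻¹ * a * b, b} :=
        Subgroup.subset_closure (by simp)
      have hr : b⁻¹ * a * b ∈ Subgroup.closure {b⁻¹ * a * b, b} :=
        Subgroup.subset_closure (by simp)
      have ha : a ∈ Subgroup.closure {b⁻¹ * a * b, b} := by
        simpa [mul_assoc] using mul_mem (mul_mem hb hr) (inv_mem hb)
      exact resolve ha hr hnil
    · exact absurd rfl hxy
    · -- (r, s)
      have hr : b⁻¹ * a * b ∈ Subgroup.closure {b⁻¹ * a * b, a} :=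
        Subgroup.subset_closure (by simp)
      have ha : a ∈ Subgroup.closure {b⁻¹ * a * b, a} :=
        Subgroup.subset_closure (by simp)
      exact resolve ha hr hnil
    -- x = s
    · -- (s, p)
      have hp : b⁻¹ * a ∈ Subgroup.closure {a, b⁻¹ * a} :=
        Subgroup.subset_closure (by simp)
      have ha : a ∈ Subgroup.closure {a, b⁻¹ * a} :=
        Subgroup.subset_closure (by simp)
      have hb : b ∈ Subgroup.closure {a, b⁻¹ * a} := by
        simpa [mul_assoc] using mul_mem ha (inv_mem hp)
      exact resolve ha (mul_mem (mul_mem (inv_mem hb) ha) hb) hnil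
    · -- (s, q)
      have hb : b ∈ Subgroup.closure {a, b} :=
        Subgroup.subset_closure (by simp)
      have ha : a ∈ Subgroup.closure {a, b} :=
        Subgroup.subset_closure (by simp)
      exact resolve ha (mul_mem (mul_mem (inv_mem hb) ha) hb) hnil
    · -- (s, r)
      have hr : b⁻¹ * a * b ∈ Subgroup.closure {a, b⁻¹ * a * b} :=
        Subgroup.subset_closure (by simp)
      have ha : a ∈ Subgroup.closure {a, b⁻¹ * a * b} :=
        Subgroup.subset_closure (by simp)
      exact resolve ha hr hnil
    · exact absurd rfl hxy
end

section
/- Let G be a group and λ a positive integer. Suppose that for all x, y in G, the subgroup ⟨x, xʸ⟩ is nilpotent of class at most λ. Then G is a (λ+1)-Engel group, i.e., [y, x, x, ..., x] = 1 with x repeated λ+1 times, for all x, y in G. -/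
open scoped commutatorElement

/-- Left-normed iterated commutator: `engel y x n = [y, x, x, ..., x]` (n copies of x). -/
def engel {G : Type*} [Group G] (y x : G) : ℕ → G
  | 0 => y
  | n + 1 => ⁅engel y x n, x⁆

lemma engel_succ_left {G : Type*} [Group G] (y x : G) (n : ℕ) :
    engel y x (n + 1) = engel ⁅y, x⁆ x n := by
  induction n with
  | zero => rfl
  | succ n ih => show ⁅engel y x (n+1), x⁆ = ⁅engel ⁅y,x⁆ x n, x⁆; rw [ih]

lemma engel_map {G K : Type*} [Group G] [Group K] (f : G →* K) (y x : G) (n : ℕ) :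
    f (engel y x n) = engel (f y) (f x) n := by
  induction n with
  | zero => rfl
  | succ n ih =>
    show f ⁅engel y x n, x⁆ = ⁅engel (f y) (f x) n, f x⁆
    rw [map_commutatorElement, ih]

lemma engel_mem_lcs {K : Type*} [Group K] (y x : K) (n : ℕ) :
    engel y x n ∈ (⊤ : Subgroup K).lowerCentralSeries n := by
  induction n with
  | zero => exact Subgroup.mem_top y
  | succ n ih =>
    rw [Subgroup.lowerCentralSeries_succ]
    exact Subgroup.commutator_mem_commutator ih (Subgroup.mem_top x)

theorem stmt_2 {G : Type*} [Group G] (lam : ℕ) (hlam : 1 ≤ lam)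
    (h : ∀ x y : G, (⊤ : Subgroup ↥(Subgroup.closure {x, y⁻¹ * x * y})).lowerCentralSeries lam = ⊥) :
    ∀ x y : G, engel y x (lam + 1) = 1 := by
  intro x y
  have hbot := h x y⁻¹
  rw [inv_inv] at hbot
  set H := Subgroup.closure {x, y * x * y⁻¹} with hH
  have hx : x ∈ H := Subgroup.subset_closure (Or.inl rfl)
  have hc : y * x * y⁻¹ ∈ H := Subgroup.subset_closure (Or.inr rfl)
  have ha : ⁅y, x⁆ ∈ H := by
    have : ⁅y, x⁆ = (y * x * y⁻¹) * x⁻¹ := by group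
    rw [this]; exact mul_mem hc (inv_mem hx)
  set a' : H := ⟨⁅y, x⁆, ha⟩
  set x' : H := ⟨x, hx⟩
  have hmem : engel a' x' lam ∈ (⊤ : Subgroup H).lowerCentralSeries lam := engel_mem_lcs a' x' lam
  rw [hbot, Subgroup.mem_bot] at hmem
  have := congrArg H.subtype hmem
  rw [engel_map H.subtype a' x' lam, map_one] at this
  rw [engel_succ_left]
  exact this
end

section
/- Let G be a group such that for all a, b in G, the subgroups ⟨a, aᵇ⟩ and ⟨a², b⟩ are nilpotent. Let p and q be distinct primes, x a p-element of G and y a q-element of G. Then xy = yx. -/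
universe u

open commutatorElement

lemma comm_mul_aux {G : Type u} [Group G] (a g h : G)
    (hc : ⁅a, h⁆ ∈ Subgroup.center G) :
    ⁅a, g * h⁆ = ⁅a, g⁆ * ⁅a, h⁆ := by
  have base : ⁅a, g * h⁆ = ⁅a, g⁆ * (g * ⁅a, h⁆ * g⁻¹) := by
    simp only [commutatorElement_def]; group
  have hc' : g * ⁅a, h⁆ = ⁅a, h⁆ * g := Subgroup.mem_center_iff.mp hc g
  rw [base, hc', mul_inv_cancel_right]

lemma comm_pow_aux {G : Type u} [Group G] (a g : G)
    (hc : ∀ t : G, ⁅a, t⁆ ∈ Subgroup.center G) (m : ℕ) :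
    ⁅a, g ^ m⁆ = ⁅a, g⁆ ^ m := by
  induction m with
  | zero => simp
  | succ m ih => rw [pow_succ, comm_mul_aux a _ _ (hc g), ih, pow_succ]

lemma comm_inv_aux {G : Type u} [Group G] (a g : G)
    (hc : ∀ t : G, ⁅a, t⁆ ∈ Subgroup.center G) :
    ⁅a, g⁻¹⁆ = ⁅a, g⁆⁻¹ := by
  have := comm_mul_aux a g⁻¹ g (hc g)
  rw [inv_mul_cancel] at this
  simp only [commutatorElement_one_right] at this
  exact (eq_inv_of_mul_eq_one_left this.symm)

/-- A group whose lower central series reaches ⊥, generated by `p`-torsion elements,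
is `p`-torsion. -/
lemma ptorsion_of_closure (p : ℕ) :
    ∀ (n : ℕ) (G : Type u) [Group G], Subgroup.lowerCentralSeries (⊤ : Subgroup G) n = ⊥ →
    ∀ S : Set G, Subgroup.closure S = ⊤ → (∀ s ∈ S, ∃ k : ℕ, s ^ p ^ k = 1) →
    ∀ g : G, ∃ k : ℕ, g ^ p ^ k = 1 := by
  intro n
  induction n with
  | zero =>
    intro G _ hbot S _ _ g
    have hg : g ∈ (⊥ : Subgroup G) := hbot ▸ Subgroup.mem_top g
    rw [Subgroup.mem_bot] at hg
    exact ⟨0, by rw [hg]; simp⟩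
  | succ n ih =>
    intro G _ hbot S hS hStor g
    have hcent : Subgroup.lowerCentralSeries (⊤ : Subgroup G) n ≤ Subgroup.center G := by
      intro a ha
      rw [Subgroup.mem_center_iff]
      intro t
      have hmem : ⁅a, t⁆ ∈ Subgroup.lowerCentralSeries (⊤ : Subgroup G) (n + 1) :=
        Subgroup.commutator_mem_commutator ha (Subgroup.mem_top t)
      rw [hbot, Subgroup.mem_bot] at hmem
      exact (commutatorElement_eq_one_iff_commute.mp hmem).symm.eq
    -- Claim: every element of γ_n is p-torsion
    have claimA : ∀ z ∈ Subgroup.lowerCentralSeries (⊤ : Subgroup G) n, ∃ k : ℕ, z ^ p ^ k = 1 := by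
      have mulP : ∀ a b : G, a ∈ Subgroup.center G → b ∈ Subgroup.center G →
          (∃ j, a ^ p ^ j = 1) → (∃ k, b ^ p ^ k = 1) → ∃ k, (a * b) ^ p ^ k = 1 := by
        rintro a b hac hbc ⟨j, hj⟩ ⟨k, hk⟩
        have hcomm : Commute a b := Subgroup.mem_center_iff.mp hbc a
        have ha' : a ^ (p ^ j * p ^ k) = 1 := by rw [pow_mul, hj, one_pow]
        have hb' : b ^ (p ^ j * p ^ k) = 1 := by rw [mul_comm, pow_mul, hk, one_pow]
        exact ⟨j + k, by rw [pow_add, hcomm.mul_pow, ha', hb', one_mul]⟩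
      cases n with
      | zero =>
        -- G is abelian here
        have hab : ∀ z : G, z ∈ Subgroup.center G := fun z =>
          hcent (by rw [lowerCentralSeries_zero]; exact Subgroup.mem_top z)
        set P : Subgroup G :=
          { carrier := {z | ∃ k : ℕ, z ^ p ^ k = 1}
            one_mem' := ⟨0, one_pow _⟩
            mul_mem' := fun {a b} haP hbP => mulP a b (hab a) (hab b) haP hbP
            inv_mem' := fun {a} ⟨k, hk⟩ => ⟨k, by rw [inv_pow, hk, inv_one]⟩ } with hP
        have htop : (⊤ : Subgroup G) ≤ P := by
          rw [← hS]
          exact (Subgroup.closure_le P).mpr (fun s hs => hStor s hs)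
        exact fun z _ => htop (Subgroup.mem_top z)
      | succ m =>
        have hc_all : ∀ a : G, a ∈ Subgroup.lowerCentralSeries (⊤ : Subgroup G) m →
            ∀ t : G, ⁅a, t⁆ ∈ Subgroup.center G := fun a ha t =>
          hcent (Subgroup.commutator_mem_commutator ha (Subgroup.mem_top t))
        -- commutators with fixed a ∈ γ_m are p-torsion
        have hCtop : ∀ a, a ∈ Subgroup.lowerCentralSeries (⊤ : Subgroup G) m → ∀ t : G, ∃ k, ⁅a, t⁆ ^ p ^ k = 1 := by
          intro a ha
          set C : Subgroup G :=
            { carrier := {t | ∃ k : ℕ, ⁅a, t⁆ ^ p ^ k = 1}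
              one_mem' := ⟨0, by simp⟩
              mul_mem' := by
                rintro t u ⟨j, hj⟩ ⟨k, hk⟩
                have := mulP ⁅a, t⁆ ⁅a, u⁆ (hc_all a ha t) (hc_all a ha u) ⟨j, hj⟩ ⟨k, hk⟩
                rw [← comm_mul_aux a t u (hc_all a ha u)] at this
                exact this
              inv_mem' := by
                rintro t ⟨j, hj⟩
                exact ⟨j, by rw [comm_inv_aux a t (hc_all a ha), inv_pow, hj, inv_one]⟩ } with hC
          intro t
          have htop : (⊤ : Subgroup G) ≤ C := by
            rw [← hS]
            refine (Subgroup.closure_le C).mpr (fun s hs => ?_)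
            obtain ⟨k, hk⟩ := hStor s hs
            exact ⟨k, by rw [← comm_pow_aux a s (hc_all a ha), hk, commutatorElement_one_right]⟩
          exact htop (Subgroup.mem_top t)
        intro z hz
        have hNle : Subgroup.lowerCentralSeries (⊤ : Subgroup G) (m + 1) ≤ Subgroup.center G := hcent
        have : ∃ k, z ^ p ^ k = 1 := by
          -- use that γ_{m+1} = ⁅γ_m, ⊤⁆ and closure_le
          have hle : Subgroup.lowerCentralSeries (⊤ : Subgroup G) (m + 1) ≤
              { carrier := {w | w ∈ Subgroup.center G ∧ ∃ k : ℕ, w ^ p ^ k = 1}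
                one_mem' := ⟨Subgroup.one_mem _, 0, one_pow _⟩
                mul_mem' := by
                  rintro w v ⟨hwc, hw⟩ ⟨hvc, hv⟩
                  exact ⟨Subgroup.mul_mem _ hwc hvc, mulP w v hwc hvc hw hv⟩
                inv_mem' := by
                  rintro w ⟨hwc, k, hk⟩
                  exact ⟨Subgroup.inv_mem _ hwc, k, by rw [inv_pow, hk, inv_one]⟩ } := by
            show ⁅Subgroup.lowerCentralSeries (⊤ : Subgroup G) m, (⊤ : Subgroup G)⁆ ≤ _
            rw [Subgroup.commutator_le]
            intro g₁ hg₁ g₂ _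
            exact ⟨hcent (Subgroup.commutator_mem_commutator hg₁ (Subgroup.mem_top g₂)),
              hCtop g₁ hg₁ g₂⟩
          exact (hle hz).2
        exact this
    -- pass to the quotient by γ_n
    let N := Subgroup.lowerCentralSeries (⊤ : Subgroup G) n
    let Q := G ⧸ N
    let f : G →* Q := QuotientGroup.mk' N
    have hfsurj : Function.Surjective f := QuotientGroup.mk'_surjective N
    have hmaple : ∀ m : ℕ, Subgroup.lowerCentralSeries (⊤ : Subgroup Q) m ≤ Subgroup.map f (Subgroup.lowerCentralSeries (⊤ : Subgroup G) m) := by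
      intro m
      induction m with
      | zero =>
        rw [lowerCentralSeries_zero, lowerCentralSeries_zero,
          Subgroup.map_top_of_surjective f hfsurj]
      | succ m ihm =>
        calc Subgroup.lowerCentralSeries (⊤ : Subgroup Q) (m + 1) = ⁅Subgroup.lowerCentralSeries (⊤ : Subgroup Q) m, (⊤ : Subgroup Q)⁆ := rfl
          _ ≤ ⁅Subgroup.map f (Subgroup.lowerCentralSeries (⊤ : Subgroup G) m), Subgroup.map f (⊤ : Subgroup G)⁆ :=
            Subgroup.commutator_mono ihm
              (by rw [Subgroup.map_top_of_surjective f hfsurj])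
          _ = Subgroup.map f ⁅Subgroup.lowerCentralSeries (⊤ : Subgroup G) m, (⊤ : Subgroup G)⁆ :=
            (Subgroup.map_commutator _ _ _).symm
          _ = Subgroup.map f (Subgroup.lowerCentralSeries (⊤ : Subgroup G) (m + 1)) := rfl
    have hQbot : Subgroup.lowerCentralSeries (⊤ : Subgroup Q) n = ⊥ := by
      have h1 := hmaple n
      have h2 : Subgroup.map f N = ⊥ := by
        rw [Subgroup.map_eq_bot_iff, QuotientGroup.ker_mk']
      exact le_bot_iff.mp (h2 ▸ h1)
    have hSQ : Subgroup.closure (f '' S) = ⊤ := by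
      rw [← MonoidHom.map_closure, hS, Subgroup.map_top_of_surjective f hfsurj]
    have hSQtor : ∀ t ∈ f '' S, ∃ k : ℕ, t ^ p ^ k = 1 := by
      rintro _ ⟨s, hs, rfl⟩
      obtain ⟨k, hk⟩ := hStor s hs
      exact ⟨k, by rw [← map_pow, hk, map_one]⟩
    obtain ⟨k, hk⟩ := ih Q hQbot (f '' S) hSQ hSQtor (f g)
    have hmemN : g ^ p ^ k ∈ N := by
      have : f (g ^ p ^ k) = 1 := by rw [map_pow]; exact hk
      rwa [← MonoidHom.mem_ker, QuotientGroup.ker_mk'] at this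
    obtain ⟨j, hj⟩ := claimA _ hmemN
    exact ⟨k + j, by rw [pow_add, pow_mul, hj]⟩

lemma subgroup_ptorsion {G : Type u} [Group G] (p : ℕ) (S : Set G)
    (hnil : Group.IsNilpotent ↥(Subgroup.closure S))
    (hStor : ∀ s ∈ S, ∃ k : ℕ, s ^ p ^ k = 1) :
    ∀ g ∈ Subgroup.closure S, ∃ k : ℕ, g ^ p ^ k = 1 := by
  obtain ⟨n, hn⟩ := nilpotent_iff_lowerCentralSeries.mp hnil
  intro g hg
  have hpre : ∀ t ∈ (((↑) : Subgroup.closure S → G) ⁻¹' S), ∃ k : ℕ, t ^ p ^ k = 1 := by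
    rintro ⟨t, ht⟩ hts
    obtain ⟨k, hk⟩ := hStor t hts
    exact ⟨k, Subtype.ext (by push_cast; exact hk)⟩
  obtain ⟨k, hk⟩ := ptorsion_of_closure p n ↥(Subgroup.closure S) hn _
    Subgroup.closure_closure_coe_preimage hpre ⟨g, hg⟩
  exact ⟨k, by simpa using congrArg (Subgroup.subtype _) hk⟩

theorem stmt_4 {G : Type*} [Group G]
    (h1 : ∀ a b : G, Group.IsNilpotent ↥(Subgroup.closure {a, b⁻¹ * a * b}))
    (h2 : ∀ a b : G, Group.IsNilpotent ↥(Subgroup.closure {a ^ 2, b}))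
    (p q : ℕ) (hp : p.Prime) (hq : q.Prime) (hpq : p ≠ q)
    (x y : G) (hx : ∃ k : ℕ, orderOf x = p ^ k) (hy : ∃ m : ℕ, orderOf y = q ^ m) :
    x * y = y * x := by
  obtain ⟨a, ha⟩ := hx
  obtain ⟨b, hb⟩ := hy
  have hxp : x ^ p ^ a = 1 := by rw [← ha]; exact pow_orderOf_eq_one x
  have hyq : y ^ q ^ b = 1 := by rw [← hb]; exact pow_orderOf_eq_one y
  -- p-side : ⁅x, y⁆ ∈ ⟨x, y x y⁻¹⟩
  have hcp : ∃ k : ℕ, ⁅x, y⁆ ^ p ^ k = 1 := by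
    refine subgroup_ptorsion p {x, (y⁻¹)⁻¹ * x * y⁻¹} (h1 x y⁻¹) ?_ ⁅x, y⁆ ?_
    · rintro s (rfl | rfl)
      · exact ⟨a, hxp⟩
      · exact ⟨a, by rw [inv_inv, conj_pow, hxp, mul_one, mul_inv_cancel]⟩
    · have hmem1 : x ∈ Subgroup.closure {x, (y⁻¹)⁻¹ * x * y⁻¹} :=
        Subgroup.subset_closure (Set.mem_insert _ _)
      have hmem2 : (y⁻¹)⁻¹ * x * y⁻¹ ∈ Subgroup.closure {x, (y⁻¹)⁻¹ * x * y⁻¹} :=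
        Subgroup.subset_closure (Set.mem_insert_of_mem _ rfl)
      have : ⁅x, y⁆ = x * ((y⁻¹)⁻¹ * x * y⁻¹)⁻¹ := by
        simp only [commutatorElement_def, inv_inv, mul_inv_rev]; group
      rw [this]
      exact Subgroup.mul_mem _ hmem1 (Subgroup.inv_mem _ hmem2)
  -- q-side : ⁅x, y⁆⁻¹ = ⁅y, x⁆ ∈ ⟨y, x y x⁻¹⟩
  have hcq : ∃ m : ℕ, ⁅x, y⁆ ^ q ^ m = 1 := by
    have : ∃ m : ℕ, ⁅y, x⁆ ^ q ^ m = 1 := by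
      refine subgroup_ptorsion q {y, (x⁻¹)⁻¹ * y * x⁻¹} (h1 y x⁻¹) ?_ ⁅y, x⁆ ?_
      · rintro s (rfl | rfl)
        · exact ⟨b, hyq⟩
        · exact ⟨b, by rw [inv_inv, conj_pow, hyq, mul_one, mul_inv_cancel]⟩
      · have hmem1 : y ∈ Subgroup.closure {y, (x⁻¹)⁻¹ * y * x⁻¹} :=
          Subgroup.subset_closure (Set.mem_insert _ _)
        have hmem2 : (x⁻¹)⁻¹ * y * x⁻¹ ∈ Subgroup.closure {y, (x⁻¹)⁻¹ * y * x⁻¹} :=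
          Subgroup.subset_closure (Set.mem_insert_of_mem _ rfl)
        have : ⁅y, x⁆ = y * ((x⁻¹)⁻¹ * y * x⁻¹)⁻¹ := by
          simp only [commutatorElement_def, inv_inv, mul_inv_rev]; group
        rw [this]
        exact Subgroup.mul_mem _ hmem1 (Subgroup.inv_mem _ hmem2)
    obtain ⟨m, hm⟩ := this
    refine ⟨m, ?_⟩
    have h' : (⁅x, y⁆⁻¹) ^ q ^ m = 1 := by rw [commutatorElement_inv]; exact hm
    rw [inv_pow, inv_eq_one] at h'
    exact h'
  obtain ⟨k, hk⟩ := hcp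
  obtain ⟨m, hm⟩ := hcq
  have hd1 : orderOf ⁅x, y⁆ ∣ p ^ k := orderOf_dvd_of_pow_eq_one hk
  have hd2 : orderOf ⁅x, y⁆ ∣ q ^ m := orderOf_dvd_of_pow_eq_one hm
  have hco : Nat.Coprime (p ^ k) (q ^ m) :=
    ((Nat.coprime_primes hp hq).mpr hpq).pow k m
  have : orderOf ⁅x, y⁆ = 1 := Nat.eq_one_of_dvd_coprimes hco hd1 hd2
  have hone : ⁅x, y⁆ = 1 := orderOf_eq_one_iff.mp this
  exact (commutatorElement_eq_one_iff_commute.mp hone)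
end

section
/- Let G be a group such that for all a, b in G, the subgroup ⟨a², b⟩ is nilpotent, and let p be an odd prime. Then the set of p-elements of G is a subgroup of G. -/
open Subgroup
open scoped commutatorElement

lemma mul_pt {G : Type*} [Group G] {p : ℕ} {a b : G} (hc : Commute a b)
    (ha : ∃ k, a ^ p ^ k = 1) (hb : ∃ k, b ^ p ^ k = 1) : ∃ k, (a * b) ^ p ^ k = 1 := by
  obtain ⟨k, hk⟩ := ha; obtain ⟨l, hl⟩ := hb
  refine ⟨k + l, ?_⟩
  rw [hc.mul_pow, pow_add]
  rw [pow_mul, hk, one_pow, mul_comm (p^k), pow_mul, hl, one_pow, one_mul]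

lemma lcs_le_map_of_surj {G H : Type*} [Group G] [Group H] (f : G →* H)
    (hf : Function.Surjective f) (n : ℕ) :
    (⊤ : Subgroup H).lowerCentralSeries n ≤ Subgroup.map f ((⊤ : Subgroup G).lowerCentralSeries n) := by
  induction n with
  | zero =>
      intro x _
      obtain ⟨y, rfl⟩ := hf x
      exact mem_map_of_mem f (mem_top y)
  | succ n ih =>
      rw [Subgroup.lowerCentralSeries_succ, Subgroup.commutator_def, closure_le]
      rintro x ⟨u, hu, v, -, rfl⟩
      obtain ⟨u', hu', rfl⟩ := ih hu
      obtain ⟨v', rfl⟩ := hf v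
      have : u' * v' * u'⁻¹ * v'⁻¹ ∈ (⊤ : Subgroup G).lowerCentralSeries (n+1) := by
        rw [Subgroup.lowerCentralSeries_succ, Subgroup.commutator_def]
        exact subset_closure ⟨u', hu', v', mem_top v', rfl⟩
      simpa [commutatorElement_def] using mem_map_of_mem f this

universe u

lemma key (p : ℕ) : ∀ (n : ℕ) (G : Type u) [Group G], (⊤ : Subgroup G).lowerCentralSeries n = ⊥ →
    ∀ S : Set G, (∀ s ∈ S, ∃ k, s ^ p ^ k = 1) → Subgroup.closure S = ⊤ →
    ∀ g : G, ∃ k, g ^ p ^ k = 1 := by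
  intro n
  induction n with
  | zero =>
      intro G _ hbot S _ _ g
      have : g ∈ (⊥ : Subgroup G) := hbot ▸ mem_top g
      exact ⟨0, by simpa using this⟩
  | succ n ih =>
      intro G _ hbot S hS hScl g
      set γ := (⊤ : Subgroup G).lowerCentralSeries n with hγ
      have hcent : γ ≤ Subgroup.center G := by
        intro z hz
        rw [Subgroup.mem_center_iff]
        intro w
        have : z * w * z⁻¹ * w⁻¹ ∈ (⊤ : Subgroup G).lowerCentralSeries (n+1) := by
          rw [Subgroup.lowerCentralSeries_succ, Subgroup.commutator_def]
          exact subset_closure ⟨z, hz, w, mem_top w, rfl⟩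
        rw [hbot, Subgroup.mem_bot] at this
        have h1 : ⁅z, w⁆ = 1 := by simpa [commutatorElement_def] using this
        exact (commutatorElement_eq_one_iff_commute.mp h1).symm.eq
      -- quotient by γ
      have hnorm : γ.Normal := Subgroup.lowerCentralSeries_normal ⊤ n
      let π := QuotientGroup.mk' γ
      have hπ : Function.Surjective π := QuotientGroup.mk'_surjective γ
      have hQbot : (⊤ : Subgroup (G ⧸ γ)).lowerCentralSeries n = ⊥ := by
        rw [eq_bot_iff]
        refine le_trans (lcs_le_map_of_surj π hπ n) ?_
        intro x hx
        obtain ⟨y, hy, rfl⟩ := hx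
        have : y ∈ π.ker := by rw [QuotientGroup.ker_mk']; exact hy
        simpa [Subgroup.mem_bot] using this
      have hQcl : Subgroup.closure (π '' S) = ⊤ := by
        rw [← MonoidHom.map_closure, hScl, ← MonoidHom.range_eq_map, MonoidHom.range_eq_top]
        exact hπ
      have hQS : ∀ s ∈ π '' S, ∃ k, s ^ p ^ k = 1 := by
        rintro _ ⟨s, hs, rfl⟩
        obtain ⟨k, hk⟩ := hS s hs
        exact ⟨k, by rw [← map_pow, hk, map_one]⟩
      have hquot : ∀ g : G, ∃ k, g ^ p ^ k ∈ γ := by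
        intro g
        obtain ⟨k, hk⟩ := ih (G ⧸ γ) hQbot (π '' S) hQS hQcl (π g)
        refine ⟨k, ?_⟩
        rw [← map_pow] at hk
        have : g ^ p ^ k ∈ π.ker := hk
        rwa [QuotientGroup.ker_mk'] at this
      -- elements of γ are p-torsion
      have hγtor : ∀ z ∈ γ, ∃ k, z ^ p ^ k = 1 := by
        cases n with
        | zero =>
            -- γ = ⊤, all elements central, G = closure S
            intro z _
            have hall : ∀ a b : G, Commute a b := fun a b =>
              (Subgroup.mem_center_iff.mp (hcent (mem_top a)) b).symm
            have hz : z ∈ Subgroup.closure S := hScl ▸ mem_top z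
            refine closure_induction (fun x hx => hS x hx) ⟨0, by simp⟩
              (fun x y _ _ hx hy => mul_pt (hall x y) hx hy)
              (fun x _ ⟨k, hk⟩ => ⟨k, by rw [inv_pow, hk, inv_one]⟩) hz
        | succ m =>
            intro z hz
            have hz' : z ∈ Subgroup.closure
                { x | ∃ u ∈ (⊤ : Subgroup G).lowerCentralSeries m, ∃ v ∈ (⊤ : Subgroup G),
                    u * v * u⁻¹ * v⁻¹ = x } := by
              rw [hγ, Subgroup.lowerCentralSeries_succ, Subgroup.commutator_def] at hz; exact hz
            refine closure_induction ?_ ⟨0, by simp⟩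
              (fun x y hx hy hx' hy' => ?_)
              (fun x _ ⟨k, hk⟩ => ⟨k, by rw [inv_pow, hk, inv_one]⟩) hz'
            · rintro _ ⟨u, hu, v, -, rfl⟩
              -- ⁅u, w⁆ is central for all w
              have hucent : ∀ w : G, ⁅u, w⁆ ∈ Subgroup.center G := fun w =>
                hcent (commutator_mem_commutator hu (mem_top w) :
                  ⁅u, w⁆ ∈ ⁅(⊤ : Subgroup G).lowerCentralSeries m, (⊤ : Subgroup G)⁆)
              have hpow : ∀ j : ℕ, ⁅u, v ^ j⁆ = ⁅u, v⁆ ^ j := by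
                intro j
                induction j with
                | zero => simp [commutatorElement_def]
                | succ j ihj =>
                    have step : ⁅u, v * v ^ j⁆ = ⁅u, v⁆ * (v * ⁅u, v ^ j⁆ * v⁻¹) := by
                      simp only [commutatorElement_def]
                      group
                    have : v * ⁅u, v ^ j⁆ * v⁻¹ = ⁅u, v ^ j⁆ := by
                      rw [Subgroup.mem_center_iff.mp (hucent (v ^ j)) v]
                      group
                    rw [pow_succ', step, this, ihj, pow_succ']
              obtain ⟨k, hk⟩ := hquot v
              refine ⟨k, ?_⟩
              have hcentvk : v ^ p ^ k ∈ Subgroup.center G := hcent hk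
              have : ⁅u, v ^ p ^ k⁆ = 1 := by
                simp only [commutatorElement_def]
                rw [Subgroup.mem_center_iff.mp hcentvk u]
                group
              calc (u * v * u⁻¹ * v⁻¹) ^ p ^ k = ⁅u, v⁆ ^ p ^ k := by
                    simp [commutatorElement_def]
                _ = ⁅u, v ^ p ^ k⁆ := (hpow _).symm
                _ = 1 := this
            · have hxγ : x ∈ γ := by rw [hγ, Subgroup.lowerCentralSeries_succ]; exact hx
              have hc : Commute x y := (Subgroup.mem_center_iff.mp (hcent hxγ) y).symm
              exact mul_pt hc hx' hy'
      obtain ⟨k, hk⟩ := hquot g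
      obtain ⟨l, hl⟩ := hγtor _ hk
      exact ⟨k + l, by rw [pow_add, pow_mul, hl]⟩

theorem stmt_5 {G : Type*} [Group G]
    (h : ∀ a b : G, Group.IsNilpotent ↥(Subgroup.closure {a ^ 2, b}))
    (p : ℕ) (hp : p.Prime) (hodd : Odd p) :
    ∃ H : Subgroup G, ∀ g : G, g ∈ H ↔ ∃ k : ℕ, orderOf g = p ^ k := by
  have hmul : ∀ a b : G, (∃ k, a ^ p ^ k = 1) → (∃ k, b ^ p ^ k = 1) →
      ∃ k, (a * b) ^ p ^ k = 1 := by
    intro a b ha hb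
    -- a has odd order, so a ∈ closure {a^2, b}
    have hodd' : Odd (orderOf a) := by
      obtain ⟨k, hk⟩ := ha
      rcases Nat.even_or_odd (orderOf a) with he | ho
      · exfalso
        have h2 : (2 : ℕ) ∣ p ^ k := dvd_trans he.two_dvd (orderOf_dvd_of_pow_eq_one hk)
        exact ((Nat.not_odd_iff_even.mpr (even_iff_two_dvd.mpr h2))) (hodd.pow)
      · exact ho
    obtain ⟨m, hm⟩ := hodd'
    have ha2 : (a ^ 2) ^ (m + 1) = a := by
      rw [← pow_mul]
      have h2 : 2 * (m + 1) = orderOf a + 1 := by omega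
      rw [h2, pow_succ, pow_orderOf_eq_one, one_mul]
    have haK : a ∈ Subgroup.closure ({a ^ 2, b} : Set G) := by
      have hmem := pow_mem (Subgroup.subset_closure
        (show a ^ 2 ∈ ({a ^ 2, b} : Set G) by simp)) (m + 1)
      rwa [ha2] at hmem
    have hKeq : Subgroup.closure ({a, b} : Set G) = Subgroup.closure ({a ^ 2, b} : Set G) := by
      apply le_antisymm
      · rw [Subgroup.closure_le]
        rintro x (rfl | rfl)
        · exact haK
        · exact Subgroup.subset_closure (by simp)
      · rw [Subgroup.closure_le]
        rintro x (rfl | rfl)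
        · exact pow_mem (Subgroup.subset_closure (by simp)) 2
        · exact Subgroup.subset_closure (by simp)
    set K := Subgroup.closure ({a, b} : Set G) with hK
    have hnil : Group.IsNilpotent K := by rw [hKeq]; exact h a b
    obtain ⟨n, hn⟩ := Subgroup.nilpotent_iff_lowerCentralSeries.mp hnil
    have hcl : Subgroup.closure ((Subtype.val : K → G) ⁻¹' ({a, b} : Set G)) = ⊤ :=
      Subgroup.closure_closure_coe_preimage
    have hS : ∀ s ∈ ((Subtype.val : K → G) ⁻¹' ({a, b} : Set G)), ∃ k, s ^ p ^ k = 1 := by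
      rintro s hs
      rcases hs with hs | hs
      · obtain ⟨k, hk⟩ := ha
        refine ⟨k, ?_⟩
        apply Subtype.ext
        push_cast
        rw [hs, hk]
      · obtain ⟨k, hk⟩ := hb
        refine ⟨k, ?_⟩
        apply Subtype.ext
        push_cast
        rw [hs, hk]
    have hamem : a ∈ K := Subgroup.subset_closure (by simp)
    have hbmem : b ∈ K := Subgroup.subset_closure (by simp)
    obtain ⟨k, hk⟩ := key p n K hn _ hS hcl ⟨a * b, mul_mem hamem hbmem⟩
    refine ⟨k, ?_⟩
    have := congrArg (Subtype.val : K → G) hk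
    push_cast at this
    exact this
  refine ⟨{ carrier := {g | ∃ k, g ^ p ^ k = 1}
            one_mem' := ⟨0, one_pow _⟩
            mul_mem' := fun {a b} ha hb => hmul a b ha hb
            inv_mem' := fun {a} ⟨k, hk⟩ => ⟨k, by rw [inv_pow, hk, inv_one]⟩ }, ?_⟩
  intro g
  constructor
  · rintro ⟨k, hk⟩
    obtain ⟨j, -, hj⟩ := (Nat.dvd_prime_pow hp).mp (orderOf_dvd_of_pow_eq_one hk)
    exact ⟨j, hj⟩
  · rintro ⟨k, hk⟩
    exact ⟨k, by rw [← hk, pow_orderOf_eq_one]⟩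
end

section
/- Let G be a group such that every subset of G with 4 elements contains a pair {x, y} with ⟨x, y⟩ abelian (i.e., G satisfies (𝒩₁, 3)). Then G is nilpotent of class at most 2. -/
theorem stmt_12 {G : Type*} [Group G]
    (h : ∀ S : Finset G, S.card = 4 → ∃ x ∈ S, ∃ y ∈ S, x ≠ y ∧
      ∀ a ∈ Subgroup.closure {x, y}, ∀ b ∈ Subgroup.closure {x, y}, a * b = b * a) :
    (⊤ : Subgroup G).lowerCentralSeries 2 = ⊥ := by
  classical
  -- Step 1: every square is central
  have key : ∀ x y : G, x * x * y = y * (x * x) := by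
    intro x y
    have base : x * y = y * x → x * x * y = y * (x * x) := by
      intro hc
      rw [mul_assoc, hc, ← mul_assoc, hc, mul_assoc]
    by_cases d1 : x = y
    · subst d1; group
    by_cases d2 : x = x * y
    · have hy : y = 1 := by
        have := mul_left_cancel (a := x) (show x * 1 = x * y by rw [mul_one, ← d2])
        exact this.symm
      subst hy; group
    by_cases d3 : x = x⁻¹ * y
    · have hy : y = x * x := by
        have : x * x = x * (x⁻¹ * y) := by rw [← d3]
        rw [mul_inv_cancel_left] at this
        exact this.symm
      subst hy; group
    by_cases d4 : y = x * y
    · have hx : x = 1 := by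
        have := mul_right_cancel (b := y) (show (1:G) * y = x * y by rw [one_mul, ← d4])
        exact this.symm
      subst hx; group
    by_cases d5 : y = x⁻¹ * y
    · have hx : x = 1 := by
        have h1 : (x:G)⁻¹ = 1 := by
          have := mul_right_cancel (b := y) (show (1:G) * y = x⁻¹ * y by rw [one_mul, ← d5])
          exact this.symm
        rw [← inv_inv x, h1, inv_one]
      subst hx; group
    by_cases d6 : x * y = x⁻¹ * y
    · have hx2 : x * x = 1 := by
        have h1 : x = x⁻¹ := mul_right_cancel (b := y) d6
        nth_rewrite 1 [h1]
        exact inv_mul_cancel x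
      rw [hx2, one_mul, mul_one]
    -- all four elements distinct
    have D2 : x * (x * y) = (x * y) * x → x * x * y = y * (x * x) := by
      intro huv
      exact base (mul_left_cancel (show x * (x * y) = x * (y * x) by rw [huv, mul_assoc]))
    have D3 : x * (x⁻¹ * y) = (x⁻¹ * y) * x → x * x * y = y * (x * x) := by
      intro huv
      apply base
      have h2 : y = x⁻¹ * y * x := by rw [← huv, mul_inv_cancel_left]
      calc x * y = x * (x⁻¹ * y * x) := by rw [← h2]
        _ = y * x := by rw [← mul_assoc, mul_inv_cancel_left]
    have D4 : y * (x * y) = (x * y) * y → x * x * y = y * (x * x) := by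
      intro huv
      apply base
      exact (mul_right_cancel (b := y) (show (y * x) * y = (x * y) * y by
        rw [mul_assoc, huv])).symm
    have D5 : y * (x⁻¹ * y) = (x⁻¹ * y) * y → x * x * y = y * (x * x) := by
      intro huv
      apply base
      have hc' : y * x⁻¹ = x⁻¹ * y := mul_right_cancel (b := y) (by rw [mul_assoc, huv])
      have h2 : x * (y * x⁻¹) = x * (x⁻¹ * y) := by rw [hc']
      rw [mul_inv_cancel_left, ← mul_assoc] at h2
      exact mul_inv_eq_iff_eq_mul.mp h2
    have D6 : (x * y) * (x⁻¹ * y) = (x⁻¹ * y) * (x * y) → x * x * y = y * (x * x) := by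
      intro huv
      have h2 : (x * y) * x⁻¹ = x⁻¹ * (y * x) := by
        apply mul_right_cancel (b := y)
        calc (x * y) * x⁻¹ * y = (x * y) * (x⁻¹ * y) := by rw [mul_assoc]
          _ = (x⁻¹ * y) * (x * y) := huv
          _ = x⁻¹ * (y * x) * y := by group
      have h3 : x * ((x * y) * x⁻¹) = x * (x⁻¹ * (y * x)) := by rw [h2]
      rw [mul_inv_cancel_left] at h3
      calc x * x * y = x * ((x * y) * x⁻¹) * x := by group
        _ = (y * x) * x := by rw [h3]
        _ = y * (x * x) := by rw [mul_assoc]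
    set S : Finset G := {x, y, x * y, x⁻¹ * y} with hS
    have hcard : S.card = 4 := by
      rw [hS]
      rw [Finset.card_insert_of_notMem (by simp [d1, d2, d3]),
        Finset.card_insert_of_notMem (by simp [d4, d5]),
        Finset.card_insert_of_notMem (by simp [d6]), Finset.card_singleton]
    obtain ⟨u, hu, v, hv, hne, hcomm⟩ := h S hcard
    have huv : u * v = v * u :=
      hcomm u (Subgroup.subset_closure (by simp)) v (Subgroup.subset_closure (by simp))
    rw [hS] at hu hv
    simp only [Finset.mem_insert, Finset.mem_singleton] at hu hv
    rcases hu with rfl | rfl | rfl | rfl <;> rcases hv with rfl | rfl | rfl | rfl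
    · exact absurd rfl hne
    · exact base huv
    · exact D2 huv
    · exact D3 huv
    · exact base huv.symm
    · exact absurd rfl hne
    · exact D4 huv
    · exact D5 huv
    · exact D2 huv.symm
    · exact D4 huv.symm
    · exact absurd rfl hne
    · exact D6 huv
    · exact D3 huv.symm
    · exact D5 huv.symm
    · exact D6 huv.symm
    · exact absurd rfl hne
  -- Step 2: every commutator is central
  have sq_central : ∀ s z : G, (s * s) * z = z * (s * s) := fun s z => key s z
  have prod_central : ∀ p q : G, (∀ z, p * z = z * p) → (∀ z, q * z = z * q) →
      ∀ z, (p * q) * z = z * (p * q) := by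
    intro p q hp hq z
    rw [mul_assoc, hq, ← mul_assoc, hp, mul_assoc]
  have comm_central : ∀ a b z : G, (a * b * a⁻¹ * b⁻¹) * z = z * (a * b * a⁻¹ * b⁻¹) := by
    intro a b z
    have e : a * b * a⁻¹ * b⁻¹ =
        ((a * b) * (a * b)) * ((b⁻¹ * a⁻¹ * b) * (b⁻¹ * a⁻¹ * b)) * (b⁻¹ * b⁻¹) := by
      group
    rw [e]
    exact prod_central _ _
      (prod_central _ _ (sq_central (a * b)) (sq_central (b⁻¹ * a⁻¹ * b)))
      (sq_central b⁻¹) z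
  -- Step 3: conclude
  have hle : (⊤ : Subgroup G).lowerCentralSeries 1 ≤ Subgroup.center G := by
    rw [Subgroup.top_lowerCentralSeries_one]
    apply Subgroup.commutator_le.mpr
    intro a _ b _
    rw [Subgroup.mem_center_iff]
    intro z
    rw [commutatorElement_def]
    exact (comm_central a b z).symm
  show (⊤ : Subgroup G).lowerCentralSeries (1 + 1) = ⊥
  rw [Subgroup.lowerCentralSeries_succ, eq_bot_iff]
  apply Subgroup.commutator_le.mpr
  intro g1 hg1 g2 _
  have hz := Subgroup.mem_center_iff.mp (hle hg1) g2
  rw [Subgroup.mem_bot, commutatorElement_def]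
  rw [← hz]
  group
end

section
/- Let G be a group such that for all x, y in G, the subgroup ⟨x, xʸ⟩ is nilpotent of class at most 2. Then G is a 3-Engel group: [y, x, x, x] = 1 for all x, y in G. -/
open scoped commutatorElement

theorem stmt_14 {G : Type*} [Group G]
    (h : ∀ x y : G, (⊤ : Subgroup ↥(Subgroup.closure {x, y⁻¹ * x * y})).lowerCentralSeries 2 = ⊥) :
    ∀ x y : G, ⁅⁅⁅y, x⁆, x⁆, x⁆ = 1 := by
  intro x y
  have h' := h x y⁻¹
  rw [inv_inv] at h'
  set H := Subgroup.closure {x, y * x * y⁻¹} with hH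
  have hx : x ∈ H := Subgroup.subset_closure (by simp)
  have hyx : y * x * y⁻¹ ∈ H := Subgroup.subset_closure (by simp)
  have hc : ⁅y, x⁆ ∈ H := by
    have e : ⁅y, x⁆ = (y * x * y⁻¹) * x⁻¹ := by group
    rw [e]; exact H.mul_mem hyx (H.inv_mem hx)
  set a : H := ⟨⁅y, x⁆, hc⟩ with ha
  set b : H := ⟨x, hx⟩ with hb
  have hmem : ⁅⁅a, b⁆, b⁆ ∈ (⊤ : Subgroup H).lowerCentralSeries 2 := by
    rw [show (2 : ℕ) = 1 + 1 from rfl, Subgroup.lowerCentralSeries_succ]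
    refine Subgroup.commutator_mem_commutator ?_ (Subgroup.mem_top b)
    rw [Subgroup.lowerCentralSeries_succ, Subgroup.lowerCentralSeries_zero]
    exact Subgroup.commutator_mem_commutator (Subgroup.mem_top a) (Subgroup.mem_top b)
  rw [h'] at hmem
  have h1 : (⁅⁅a, b⁆, b⁆ : H) = 1 := Subgroup.mem_bot.mp hmem
  have h2 := congrArg (Subtype.val) h1
  simpa [commutatorElement_def, ha, hb] using h2
end

section
/- Let G be a group satisfying condition (𝒩₂, 3): every subset of G with 4 elements contains a pair {x, y} such that ⟨x, y⟩ is nilpotent of class at most 2. Then G is solvable of derived length at most 3. -/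
open scoped commutatorElement

namespace Stmt15
variable {G : Type*} [Group G]

/-- right 2-Engel -/
def R2 (a : G) : Prop := ∀ y : G, ⁅⁅a, y⁆, y⁆ = 1

-- helpers
lemma repl {a b c d : G} (h : a * b = c * d) (r : G) : a * (b * r) = c * (d * r) := by
  rw [← mul_assoc, h, mul_assoc]

lemma lc {p q : G} (h : Commute p q) (r : G) : p * (q * r) = q * (p * r) :=
  repl h.eq r

lemma comm_cy {a : G} (ha : R2 a) (y : G) : Commute ⁅a, y⁆ y :=
  commutatorElement_eq_one_iff_commute.mp (ha y)

lemma comm_ca {a : G} (ha : R2 a) (y : G) : Commute ⁅a, y⁆ a := by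
  have h1 : Commute ⁅a, y⁆ (y * a) := by
    have e : ⁅a, y * a⁆ = ⁅a, y⁆ := by group
    simpa [e] using comm_cy ha (y * a)
  have h2 := ((comm_cy ha y).inv_right.mul_right h1)
  simpa using h2

lemma comm_conj {a : G} (ha : R2 a) (g h : G) :
    Commute (g * a * g⁻¹) (h * a * h⁻¹) := by
  have base : ∀ k : G, Commute a (k * a * k⁻¹) := by
    intro k
    have h1 : k * a * k⁻¹ = ⁅k, a⁆ * a := by group
    have h2 : Commute a ⁅k, a⁆ := by
      have : ⁅k, a⁆ = ⁅a, k⁆⁻¹ := by group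
      rw [this]
      exact ((comm_ca ha k).symm).inv_right
    rw [h1]
    exact h2.mul_right (Commute.refl a)
  have h3 : Commute a (g⁻¹ * h * a * (g⁻¹ * h)⁻¹) := base (g⁻¹ * h)
  have h4 : Commute (g * a * g⁻¹) (g * (g⁻¹ * h * a * (g⁻¹ * h)⁻¹) * g⁻¹) := by
    unfold Commute SemiconjBy at h3 ⊢
    have := congrArg (fun z => g * z * g⁻¹) h3
    simp only [mul_assoc] at this ⊢
    simpa using this
  have e : g * (g⁻¹ * h * a * (g⁻¹ * h)⁻¹) * g⁻¹ = h * a * h⁻¹ := by group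
  rwa [e] at h4

lemma comm_fam {a : G} (ha : R2 a) (y z : G) : Commute ⁅a, y⁆ ⁅a, z⁆ := by
  have e1 : ⁅a, y⁆ = a * (y * a⁻¹ * y⁻¹) := by group
  have e2 : ⁅a, z⁆ = a * (z * a⁻¹ * z⁻¹) := by group
  have c1 : ∀ g h : G, Commute (g * a * g⁻¹) (h * a⁻¹ * h⁻¹) := by
    intro g h
    have := (comm_conj ha g h).inv_right
    simpa [mul_assoc] using this
  have caa : Commute a (z * a⁻¹ * z⁻¹) := by
    have := c1 1 z; simpa using this
  have cya : Commute (y * a⁻¹ * y⁻¹) a := by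
    have := (c1 1 y).symm; simpa using this
  have cyz : Commute (y * a⁻¹ * y⁻¹) (z * a⁻¹ * z⁻¹) := by
    have := ((comm_conj ha y z).inv_left).inv_right
    simpa [mul_assoc] using this
  rw [e1, e2]
  have h1 : Commute a (a * (z * a⁻¹ * z⁻¹)) := (Commute.refl a).mul_right caa
  have h2 : Commute (y * a⁻¹ * y⁻¹) (a * (z * a⁻¹ * z⁻¹)) := (cya.symm).symm.mul_right cyz
  exact h1.mul_left h2


lemma st1 {a b : G} (ha : R2 a) (hb : R2 b) (x : G) :
    x * ⁅a, b⁆ * x⁻¹ = ⁅b, ⁅a, x⁆⁆⁻¹ * ⁅a, b⁆ := by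
  set s := ⁅a, x⁆ with hs
  set f := ⁅a, b⁆ with hf
  set w := ⁅b, s⁆ with hw
  have csx : Commute s x := comm_cy ha x
  have cfb : Commute f b := comm_cy ha b
  have cwb : Commute w b := comm_ca hb s
  have cws : Commute w s := comm_cy hb s
  have h0 : Commute ⁅a, x * b⁆ (x * b) := comm_cy ha (x * b)
  have idA : ⁅a, x * b⁆ = s * (x * f * x⁻¹) := by rw [hs, hf]; group
  rw [idA] at h0
  have h0e := h0.eq
  have h1 : s * (x * (f * b)) = x * (b * (s * (x * (f * x⁻¹)))) := by
    calc s * (x * (f * b)) = s * (x * f * x⁻¹) * (x * b) := by group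
    _ = (x * b) * (s * (x * f * x⁻¹)) := h0e
    _ = x * (b * (s * (x * (f * x⁻¹)))) := by group
  have e2 : w * (s * b) = b * s := by rw [hw]; group
  have hsb : s * b = b * (w⁻¹ * s) := by
    calc s * b = w⁻¹ * (w * (s * b)) := by group
    _ = w⁻¹ * (b * s) := by rw [e2]
    _ = b * (w⁻¹ * s) := lc cwb.inv_left s
  have h2 : s * (x * (f * b)) = x * (b * (w⁻¹ * (s * f))) := by
    calc s * (x * (f * b)) = x * (s * (f * b)) := lc csx _
    _ = x * (s * (b * f)) := by rw [cfb.eq]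
    _ = x * (s * b * f) := by simp only [mul_assoc]
    _ = x * (b * (w⁻¹ * s) * f) := by rw [hsb]
    _ = x * (b * (w⁻¹ * (s * f))) := by simp only [mul_assoc]
  have h3 : x * (b * (w⁻¹ * (s * f))) = x * (b * (s * (x * (f * x⁻¹)))) :=
    h2.symm.trans h1
  have h4 : w⁻¹ * (s * f) = s * (x * (f * x⁻¹)) :=
    mul_left_cancel (mul_left_cancel h3)
  have h5 : s * (w⁻¹ * f) = s * (x * (f * x⁻¹)) := by
    rw [← lc cws.inv_left f]; exact h4
  have h6 : w⁻¹ * f = x * (f * x⁻¹) := mul_left_cancel h5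
  calc x * f * x⁻¹ = x * (f * x⁻¹) := by group
  _ = w⁻¹ * f := h6.symm

lemma key {a b : G} (ha : R2 a) (hb : R2 b) (x : G) :
    ⁅b, ⁅a, x⁆⁆ = ⁅a, ⁅b, x⁆⁆⁻¹ := by
  have h1 := st1 ha hb x
  have h2 := st1 hb ha x
  have e : ⁅b, a⁆ = ⁅a, b⁆⁻¹ := by group
  rw [e] at h2
  have h3 : x * ⁅a, b⁆ * x⁻¹ = ⁅a, b⁆ * ⁅a, ⁅b, x⁆⁆ := by
    calc x * ⁅a, b⁆ * x⁻¹ = (x * ⁅a, b⁆⁻¹ * x⁻¹)⁻¹ := by group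
    _ = (⁅a, ⁅b, x⁆⁆⁻¹ * ⁅a, b⁆⁻¹)⁻¹ := by rw [h2]
    _ = ⁅a, b⁆ * ⁅a, ⁅b, x⁆⁆ := by group
  have cfu : Commute ⁅a, b⁆ ⁅a, ⁅b, x⁆⁆ := comm_fam ha b ⁅b, x⁆
  have h5 : ⁅b, ⁅a, x⁆⁆⁻¹ * ⁅a, b⁆ = ⁅a, b⁆ * ⁅a, ⁅b, x⁆⁆ := h1.symm.trans h3
  have h6 : ⁅b, ⁅a, x⁆⁆⁻¹ = ⁅a, ⁅b, x⁆⁆ := by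
    calc ⁅b, ⁅a, x⁆⁆⁻¹ = ⁅b, ⁅a, x⁆⁆⁻¹ * ⁅a, b⁆ * ⁅a, b⁆⁻¹ := by group
    _ = ⁅a, b⁆ * ⁅a, ⁅b, x⁆⁆ * ⁅a, b⁆⁻¹ := by rw [h5]
    _ = ⁅a, ⁅b, x⁆⁆ * ⁅a, b⁆ * ⁅a, b⁆⁻¹ := by rw [cfu.eq]
    _ = ⁅a, ⁅b, x⁆⁆ := by group
  calc ⁅b, ⁅a, x⁆⁆ = (⁅b, ⁅a, x⁆⁆⁻¹)⁻¹ := by group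
  _ = ⁅a, ⁅b, x⁆⁆⁻¹ := by rw [h6]

lemma conjf {a b : G} (ha : R2 a) (hb : R2 b) (x : G) :
    x * ⁅a, b⁆ * x⁻¹ = ⁅a, ⁅b, x⁆⁆ * ⁅a, b⁆ := by
  rw [st1 ha hb x, key ha hb x, inv_inv]

lemma cyc {a b : G} (ha : R2 a) (hb : R2 b) (x : G) :
    ⁅x, ⁅a, b⁆⁆ = ⁅a, ⁅b, x⁆⁆ := by
  calc ⁅x, ⁅a, b⁆⁆ = (x * ⁅a, b⁆ * x⁻¹) * ⁅a, b⁆⁻¹ := by group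
  _ = (⁅a, ⁅b, x⁆⁆ * ⁅a, b⁆) * ⁅a, b⁆⁻¹ := by rw [conjf ha hb x]
  _ = ⁅a, ⁅b, x⁆⁆ := by group

lemma i1 {a b : G} (ha : R2 a) (hb : R2 b) (x : G) :
    ⁅⁅a, b⁆, x⁆ = ⁅b, ⁅a, x⁆⁆ := by
  have h1 : ⁅⁅a, b⁆, x⁆ = ⁅x, ⁅a, b⁆⁆⁻¹ := by group
  rw [h1, cyc ha hb x, ← key ha hb x]

lemma inv_r {a : G} (ha : R2 a) (y : G) : ⁅a, y⁻¹⁆ = ⁅a, y⁆⁻¹ := by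
  calc ⁅a, y⁻¹⁆ = y⁻¹ * (⁅a, y⁆⁻¹ * y) := by group
  _ = y⁻¹ * (y * ⁅a, y⁆⁻¹) := by rw [(comm_cy ha y).inv_left.eq]
  _ = ⁅a, y⁆⁻¹ := by group

lemma inv_l {a : G} (ha : R2 a) (y : G) : ⁅a⁻¹, y⁆ = ⁅a, y⁆⁻¹ := by
  calc ⁅a⁻¹, y⁆ = a⁻¹ * (⁅a, y⁆⁻¹ * a) := by group
  _ = a⁻¹ * (a * ⁅a, y⁆⁻¹) := by rw [(comm_ca ha y).inv_left.eq]
  _ = ⁅a, y⁆⁻¹ := by group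

lemma ux {a b : G} (ha : R2 a) (hb : R2 b) (x : G) :
    Commute ⁅a, ⁅b, x⁆⁆ x := by
  set s := ⁅a, x⁆ with hs
  set t := ⁅b, x⁆ with ht
  set f := ⁅a, b⁆ with hf
  set u := ⁅a, t⁆ with hu
  have csx : Commute s x := comm_cy ha x
  have cfb : Commute f b := comm_cy ha b
  have cfu : Commute f u := comm_fam ha b t
  have hconjf : x * f * x⁻¹ = u * f := conjf ha hb x
  have h0 : Commute ⁅a, b * x⁆ (b * x) := comm_cy ha (b * x)
  have e1 : b * s * b⁻¹ = u⁻¹ * s := by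
    have e1a : b * s * b⁻¹ = ⁅b, s⁆ * s := by group
    rw [e1a, hs, key ha hb x, ← ht, ← hu]
  have idB : ⁅a, b * x⁆ = f * (u⁻¹ * s) := by
    have e : ⁅a, b * x⁆ = f * (b * s * b⁻¹) := by rw [hf, hs]; group
    rw [e, e1]
  rw [idB] at h0
  have h0e := h0.eq
  have e2 : u * (b * s) = s * b := by
    calc u * (b * s) = u * ((b * s * b⁻¹) * b) := by group
    _ = u * ((u⁻¹ * s) * b) := by rw [e1]
    _ = s * b := by group
  have hLHS : f * (u⁻¹ * s) * (b * x) = b * (f * (s * x)) := by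
    calc f * (u⁻¹ * s) * (b * x) = f * (u⁻¹ * (s * b * x)) := by
          simp only [mul_assoc]
    _ = f * (u⁻¹ * (u * (b * s) * x)) := by rw [← e2]
    _ = f * (b * (s * x)) := by group
    _ = b * (f * (s * x)) := lc cfb _
  have hxf : ∀ r : G, x * (f * r) = u * (f * (x * r)) := by
    intro r
    have e : x * f = (u * f) * x := by
      calc x * f = (x * f * x⁻¹) * x := by group
      _ = (u * f) * x := by rw [hconjf]
    calc x * (f * r) = (x * f) * r := by rw [mul_assoc]
    _ = (u * f) * x * r := by rw [e]
    _ = u * (f * (x * r)) := by simp only [mul_assoc]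
  have hRHS : (b * x) * (f * (u⁻¹ * s)) = b * (u * (f * (x * (u⁻¹ * s)))) := by
    calc (b * x) * (f * (u⁻¹ * s)) = b * (x * (f * (u⁻¹ * s))) := by
          simp only [mul_assoc]
    _ = b * (u * (f * (x * (u⁻¹ * s)))) := by rw [hxf]
  have h7 : f * (s * x) = u * (f * (x * (u⁻¹ * s))) :=
    mul_left_cancel ((hLHS.symm.trans h0e).trans hRHS)
  have h8 : f * (u⁻¹ * (s * x)) = f * (x * (u⁻¹ * s)) := by
    calc f * (u⁻¹ * (s * x)) = u⁻¹ * (f * (s * x)) := lc cfu.inv_right _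
    _ = u⁻¹ * (u * (f * (x * (u⁻¹ * s)))) := by rw [h7]
    _ = f * (x * (u⁻¹ * s)) := by group
  have h9 : u⁻¹ * (s * x) = x * (u⁻¹ * s) := mul_left_cancel h8
  have h10 : (u⁻¹ * s) * x = (x * u⁻¹) * s := by
    calc (u⁻¹ * s) * x = u⁻¹ * (s * x) := by rw [mul_assoc]
    _ = x * (u⁻¹ * s) := h9
    _ = (x * u⁻¹) * s := by rw [mul_assoc]
  have h11 : u⁻¹ * x = x * u⁻¹ := by
    have h12 : (u⁻¹ * x) * s = (x * u⁻¹) * s := by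
      calc (u⁻¹ * x) * s = u⁻¹ * (x * s) := by rw [mul_assoc]
      _ = u⁻¹ * (s * x) := by rw [csx.eq]
      _ = (u⁻¹ * s) * x := by rw [mul_assoc]
      _ = (x * u⁻¹) * s := h10
    exact mul_right_cancel h12
  exact Commute.inv_left_iff.mp h11

lemma star {a b : G} (ha : R2 a) (hb : R2 b) (x : G) :
    Commute ⁅a, x⁆ ⁅b, x⁆ := by
  set s := ⁅a, x⁆ with hs
  set t := ⁅b, x⁆ with ht
  set u := ⁅a, t⁆ with hu
  have csx : Commute s x := comm_cy ha x
  have ctx : Commute t x := comm_cy hb x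
  have cux : Commute u x := ux ha hb x
  have cut : Commute u t := comm_cy ha t
  have h0 : Commute ⁅a, t * x⁆ (t * x) := comm_cy ha (t * x)
  have idC : ⁅a, t * x⁆ = u * (t * s * t⁻¹) := by rw [hu, ht, hs]; group
  rw [idC] at h0
  have h0e := h0.eq
  have hL : u * (t * s * t⁻¹) * (t * x) = t * (u * (s * x)) := by
    calc u * (t * s * t⁻¹) * (t * x) = u * (t * (s * x)) := by group
    _ = u * t * (s * x) := by rw [← mul_assoc]
    _ = t * u * (s * x) := by rw [cut.eq]
    _ = t * (u * (s * x)) := by rw [mul_assoc]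
  have hR : (t * x) * (u * (t * s * t⁻¹)) = t * (u * (t * (s * (x * t⁻¹)))) := by
    calc (t * x) * (u * (t * s * t⁻¹)) = t * (x * (u * (t * (s * t⁻¹)))) := by
          simp only [mul_assoc]
    _ = t * (u * (x * (t * (s * t⁻¹)))) := by rw [lc cux.symm]
    _ = t * (u * (t * (x * (s * t⁻¹)))) := by rw [lc ctx.symm]
    _ = t * (u * (t * (s * (x * t⁻¹)))) := by rw [lc csx.symm]
  have h1 : u * (s * x) = u * (t * (s * (x * t⁻¹))) :=
    mul_left_cancel ((hL.symm.trans h0e).trans hR)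
  have h2 : s * x = t * (s * (x * t⁻¹)) := mul_left_cancel h1
  have h3 : (s * x) * t = t * (s * x) := by
    calc (s * x) * t = t * (s * (x * t⁻¹)) * t := by rw [h2]
    _ = t * (s * x) := by group
  have h4 : (s * t) * x = (t * s) * x := by
    calc (s * t) * x = s * (t * x) := by rw [mul_assoc]
    _ = s * (x * t) := by rw [ctx.eq]
    _ = (s * x) * t := by rw [mul_assoc]
    _ = t * (s * x) := h3
    _ = (t * s) * x := by rw [mul_assoc]
  exact mul_right_cancel h4

lemma oneR : R2 (1 : G) := by intro y; group

lemma mulR {a b : G} (ha : R2 a) (hb : R2 b) : R2 (a * b) := by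
  intro x
  rw [commutatorElement_eq_one_iff_commute]
  have idD : ⁅a * b, x⁆ = (⁅a, ⁅b, x⁆⁆ * ⁅b, x⁆) * ⁅a, x⁆ := by group
  rw [idD]
  exact Commute.mul_left (Commute.mul_left (ux ha hb x) (comm_cy hb x)) (comm_cy ha x)

lemma invR {a : G} (ha : R2 a) : R2 a⁻¹ := by
  intro y
  rw [inv_l ha y, commutatorElement_eq_one_iff_commute]
  exact (comm_cy ha y).inv_left

lemma conjR {a : G} (ha : R2 a) (g : G) : R2 (g * a * g⁻¹) := by
  intro y
  have e : ⁅⁅g * a * g⁻¹, y⁆, y⁆ = g * ⁅⁅a, g⁻¹ * y * g⁆, g⁻¹ * y * g⁆ * g⁻¹ := by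
    group
  rw [e, ha (g⁻¹ * y * g)]
  group

lemma conj_eq_self {p g : G} (h : Commute p g) : g * p * g⁻¹ = p := by
  rw [← h.eq]; group

lemma commR2 {α β : G} (ha : R2 α) (hb : R2 β) : R2 ⁅α, β⁆ := by
  have e : ⁅α, β⁆ = α * (β * α⁻¹ * β⁻¹) := by group
  rw [e]; exact mulR ha (conjR (invR ha) β)

lemma theta {p q w r : G} (hp : R2 p) (hq : R2 q) (hw : R2 w) (hr : R2 r) :
    ⁅⁅q, p⁆, ⁅w, r⁆⁆ = 1 := by
  set X := ⁅q, p⁆ with hXd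
  set W := ⁅w, r⁆ with hWd
  set E := ⁅q, W⁆ with hEd
  set d := ⁅p, W⁆ with hdd
  set T := ⁅p, E⁆ with hTd
  have hX : R2 X := commR2 hq hp
  have hW : R2 W := commR2 hw hr
  have hE : R2 E := commR2 hq hW
  have hd : R2 d := commR2 hp hW
  have hT1 : ⁅X, W⁆ = T := by rw [hXd, hTd, hEd]; exact i1 hq hp W
  have hT2 : ⁅q, d⁆ = T⁻¹ := by rw [hdd, hTd, hEd]; exact key hp hq W
  have cp : Commute T p := comm_ca hp E
  have cq : Commute T q := by
    have h := comm_ca hq d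
    rw [hT2] at h
    exact (Commute.inv_left_iff.mp h)
  have cW : Commute T W := by have h := comm_cy hX W; rwa [hT1] at h
  have HW : (q * ⁅⁅q⁻¹, p⁆, W⁆⁻¹ * q⁻¹) * (p * ⁅⁅p⁻¹, W⁆, q⁆⁻¹ * p⁻¹) *
      (W * ⁅⁅W⁻¹, q⁆, p⁆⁻¹ * W⁻¹) = 1 := by group
  have c1 : ⁅⁅q⁻¹, p⁆, W⁆ = T⁻¹ := by
    rw [inv_l hq p, ← hXd, inv_l hX W, hT1]
  have c2 : ⁅⁅p⁻¹, W⁆, q⁆ = T⁻¹ := by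
    rw [inv_l hp W, ← hdd, inv_l hd q]
    rw [show ⁅d, q⁆ = ⁅q, d⁆⁻¹ by group, hT2]
    simp
  have c3 : ⁅⁅W⁻¹, q⁆, p⁆ = T⁻¹ := by
    rw [inv_l hW q, commutatorElement_inv W q, ← hEd,
      ← commutatorElement_inv p E, hTd]
  have cube : T * T * T = 1 := by
    rw [c1, c2, c3] at HW
    simp only [inv_inv] at HW
    rw [conj_eq_self cq, conj_eq_self cp, conj_eq_self cW] at HW
    exact HW
  have hphi1 : T = ⁅p, ⁅q, ⁅w, r⁆⁆⁆ := by rw [hTd, hEd, hWd]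
  have hphi2 : ⁅r, ⁅w, ⁅q, p⁆⁆⁆ = T⁻¹ := by
    rw [← hXd, ← i1 hw hr X, ← hWd, ← commutatorElement_inv X W, hT1]
  have sq : T = T⁻¹ := by
    calc T = ⁅p, ⁅q, ⁅w, r⁆⁆⁆ := hphi1
    _ = ⁅q, ⁅p, ⁅w, r⁆⁆⁆⁻¹ := key hq hp ⁅w, r⁆
    _ = ⁅q, ⁅w, ⁅r, p⁆⁆⁆⁻¹ := by rw [cyc hw hr p]
    _ = ⁅q, ⁅r, ⁅p, w⁆⁆⁆⁻¹ := by rw [cyc hr hp w]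
    _ = (⁅r, ⁅q, ⁅p, w⁆⁆⁆⁻¹)⁻¹ := by rw [key hr hq ⁅p, w⁆]
    _ = ⁅r, ⁅q, ⁅p, w⁆⁆⁆ := by group
    _ = ⁅r, ⁅p, ⁅w, q⁆⁆⁆ := by rw [cyc hp hw q]
    _ = ⁅r, ⁅w, ⁅q, p⁆⁆⁆ := by rw [cyc hw hq p]
    _ = T⁻¹ := hphi2
  have sq1 : T * T = 1 := mul_eq_one_iff_eq_inv.mpr sq
  have cube' : T * (T * T) = 1 := by rw [← mul_assoc]; exact cube
  rw [sq1, mul_one] at cube'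
  rw [hT1, cube']

lemma cls2 {K : Subgroup G} (hK : Subgroup.lowerCentralSeries (⊤ : Subgroup ↥K) 2 = ⊥) {a b : G}
    (ha : a ∈ K) (hb : b ∈ K) : ⁅⁅a, b⁆, b⁆ = 1 := by
  set A : ↥K := ⟨a, ha⟩ with hA
  set B : ↥K := ⟨b, hb⟩ with hB
  have h1 : ⁅A, B⁆ ∈ Subgroup.lowerCentralSeries (⊤ : Subgroup ↥K) 1 := by
    exact Subgroup.commutator_mem_commutator (Subgroup.mem_top A) (Subgroup.mem_top B)
  have h2 : ⁅⁅A, B⁆, B⁆ ∈ Subgroup.lowerCentralSeries (⊤ : Subgroup ↥K) 2 := by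
    exact Subgroup.commutator_mem_commutator h1 (Subgroup.mem_top B)
  rw [hK, Subgroup.mem_bot] at h2
  have h3 := congrArg (Subtype.val) h2
  simpa [commutatorElement_def] using h3

lemma sq_engel {x y : G}
    (h : ∀ S : Finset G, S.card = 4 → ∃ a ∈ S, ∃ b ∈ S, a ≠ b ∧
      Subgroup.lowerCentralSeries (⊤ : Subgroup ↥(Subgroup.closure {a, b})) 2 = ⊥) :
    ⁅⁅x * x, y⁆, y⁆ = 1 := by
  classical
  by_cases hx1 : x = 1
  · subst hx1; group
  by_cases hy1 : y = 1
  · subst hy1; group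
  by_cases hxy : x = y
  · subst hxy; group
  by_cases hyxi : y = x⁻¹
  · subst hyxi; group
  by_cases hx2 : x * x = 1
  · rw [hx2]; group
  have d1 : x ≠ x * y := by
    intro hc
    exact hy1 (mul_left_cancel (a := x) (by rw [mul_one]; exact hc)).symm
  have d2 : x ≠ x * x * y := by
    intro hc
    apply hyxi
    have e : y = (x * x)⁻¹ * (x * x * y) := by group
    rw [← hc] at e; rw [e]; group
  have d3 : y ≠ x * y := by
    intro hc
    exact hx1 (mul_right_cancel (b := y) (by rw [one_mul]; exact hc)).symm
  have d4 : y ≠ x * x * y := by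
    intro hc
    exact hx2 (mul_right_cancel (b := y) (by rw [one_mul]; exact hc)).symm
  have d5 : x * y ≠ x * x * y := by
    intro hc
    apply hx1
    have e := mul_right_cancel (b := y) hc
    exact (mul_left_cancel (a := x) (by rw [mul_one]; exact e)).symm
  have n1 : x ∉ ({y, x * y, x * x * y} : Finset G) := by
    simp only [Finset.mem_insert, Finset.mem_singleton]
    push_neg
    exact ⟨hxy, d1, d2⟩
  have n2 : y ∉ ({x * y, x * x * y} : Finset G) := by
    simp only [Finset.mem_insert, Finset.mem_singleton]
    push_neg
    exact ⟨d3, d4⟩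
  have n3 : (x * y) ∉ ({x * x * y} : Finset G) := by
    simpa using d5
  have hcard : ({x, y, x * y, x * x * y} : Finset G).card = 4 := by
    rw [Finset.card_insert_of_notMem n1, Finset.card_insert_of_notMem n2,
      Finset.card_insert_of_notMem n3, Finset.card_singleton]
  obtain ⟨a, haS, b, hbS, hab, hcl⟩ := h _ hcard
  simp only [Finset.mem_insert, Finset.mem_singleton] at haS hbS
  set H := Subgroup.closure ({a, b} : Set G) with hH
  have ma : a ∈ H := Subgroup.subset_closure (by simp)
  have mb : b ∈ H := Subgroup.subset_closure (by simp)
  suffices hmem : (x * x) ∈ H ∧ y ∈ H by exact cls2 hcl hmem.1 hmem.2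
  rcases haS with h1 | h1 | h1 | h1 <;> rcases hbS with h2 | h2 | h2 | h2
  · exact absurd (h1.trans h2.symm) hab
  · -- a = x, b = y
    have pa : x ∈ H := h1 ▸ ma
    have pb : y ∈ H := h2 ▸ mb
    exact ⟨H.mul_mem pa pa, pb⟩
  · -- a = x, b = x*y
    have pa : x ∈ H := h1 ▸ ma
    have pb : x * y ∈ H := h2 ▸ mb
    refine ⟨H.mul_mem pa pa, ?_⟩
    have := H.mul_mem (H.inv_mem pa) pb
    exact (show x⁻¹ * (x * y) = y by group) ▸ this
  · -- a = x, b = x*x*y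
    have pa : x ∈ H := h1 ▸ ma
    have pb : x * x * y ∈ H := h2 ▸ mb
    refine ⟨H.mul_mem pa pa, ?_⟩
    have := H.mul_mem (H.inv_mem (H.mul_mem pa pa)) pb
    exact (show (x * x)⁻¹ * (x * x * y) = y by group) ▸ this
  · -- a = y, b = x
    have pa : y ∈ H := h1 ▸ ma
    have pb : x ∈ H := h2 ▸ mb
    exact ⟨H.mul_mem pb pb, pa⟩
  · exact absurd (h1.trans h2.symm) hab
  · -- a = y, b = x*y
    have pa : y ∈ H := h1 ▸ ma
    have pb : x * y ∈ H := h2 ▸ mb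
    have hx : x ∈ H := by
      have := H.mul_mem pb (H.inv_mem pa)
      exact (show x * y * y⁻¹ = x by group) ▸ this
    exact ⟨H.mul_mem hx hx, pa⟩
  · -- a = y, b = x*x*y
    have pa : y ∈ H := h1 ▸ ma
    have pb : x * x * y ∈ H := h2 ▸ mb
    refine ⟨?_, pa⟩
    have := H.mul_mem pb (H.inv_mem pa)
    exact (show x * x * y * y⁻¹ = x * x by group) ▸ this
  · -- a = x*y, b = x
    have pa : x * y ∈ H := h1 ▸ ma
    have pb : x ∈ H := h2 ▸ mb
    have hy : y ∈ H := by
      have := H.mul_mem (H.inv_mem pb) pa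
      exact (show x⁻¹ * (x * y) = y by group) ▸ this
    exact ⟨H.mul_mem pb pb, hy⟩
  · -- a = x*y, b = y
    have pa : x * y ∈ H := h1 ▸ ma
    have pb : y ∈ H := h2 ▸ mb
    have hx : x ∈ H := by
      have := H.mul_mem pa (H.inv_mem pb)
      exact (show x * y * y⁻¹ = x by group) ▸ this
    exact ⟨H.mul_mem hx hx, pb⟩
  · exact absurd (h1.trans h2.symm) hab
  · -- a = x*y, b = x*x*y
    have pa : x * y ∈ H := h1 ▸ ma
    have pb : x * x * y ∈ H := h2 ▸ mb
    have hx : x ∈ H := by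
      have := H.mul_mem pb (H.inv_mem pa)
      exact (show x * x * y * (x * y)⁻¹ = x by group) ▸ this
    have hy : y ∈ H := by
      have := H.mul_mem (H.inv_mem hx) pa
      exact (show x⁻¹ * (x * y) = y by group) ▸ this
    exact ⟨H.mul_mem hx hx, hy⟩
  · -- a = x*x*y, b = x
    have pa : x * x * y ∈ H := h1 ▸ ma
    have pb : x ∈ H := h2 ▸ mb
    refine ⟨H.mul_mem pb pb, ?_⟩
    have := H.mul_mem (H.inv_mem (H.mul_mem pb pb)) pa
    exact (show (x * x)⁻¹ * (x * x * y) = y by group) ▸ this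
  · -- a = x*x*y, b = y
    have pa : x * x * y ∈ H := h1 ▸ ma
    have pb : y ∈ H := h2 ▸ mb
    refine ⟨?_, pb⟩
    have := H.mul_mem pa (H.inv_mem pb)
    exact (show x * x * y * y⁻¹ = x * x by group) ▸ this
  · -- a = x*x*y, b = x*y
    have pa : x * x * y ∈ H := h1 ▸ ma
    have pb : x * y ∈ H := h2 ▸ mb
    have hx : x ∈ H := by
      have := H.mul_mem pa (H.inv_mem pb)
      exact (show x * x * y * (x * y)⁻¹ = x by group) ▸ this
    have hy : y ∈ H := by
      have := H.mul_mem (H.inv_mem hx) pb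
      exact (show x⁻¹ * (x * y) = y by group) ▸ this
    exact ⟨H.mul_mem hx hx, hy⟩
  · exact absurd (h1.trans h2.symm) hab

end Stmt15

theorem stmt_15 {G : Type*} [Group G]
    (h : ∀ S : Finset G, S.card = 4 → ∃ x ∈ S, ∃ y ∈ S, x ≠ y ∧
      Subgroup.lowerCentralSeries (⊤ : Subgroup ↥(Subgroup.closure {x, y})) 2 = ⊥) :
    derivedSeries G 3 = ⊥ := by
  open Stmt15 in
  have hsq : ∀ x : G, R2 (x * x) := fun x y => sq_engel h
  let N : Subgroup G :=
    { carrier := {a : G | R2 a}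
      one_mem' := oneR
      mul_mem' := fun ha hb => mulR ha hb
      inv_mem' := fun ha => invR ha }
  have hcommN : ∀ g k : G, ⁅g, k⁆ ∈ N := by
    intro g k
    have e : ⁅g, k⁆ = g * g * ((g⁻¹ * k) * (g⁻¹ * k)) * (k⁻¹ * k⁻¹) := by group
    rw [e]
    exact N.mul_mem (N.mul_mem (hsq g) (hsq (g⁻¹ * k))) (hsq k⁻¹)
  have hD1N : derivedSeries G 1 ≤ N := by
    rw [derivedSeries_succ, derivedSeries_zero]
    exact Subgroup.commutator_le.mpr fun g _ k _ => hcommN g k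
  have hA : ∀ p q : G, p ∈ derivedSeries G 1 → q ∈ derivedSeries G 1 →
      derivedSeries G 2 ≤ Subgroup.centralizer {⁅q, p⁆} := by
    intro p q hp hq
    rw [derivedSeries_succ]
    refine Subgroup.commutator_le.mpr ?_
    intro w hw r hr
    rw [Subgroup.mem_centralizer_iff]
    intro g hg
    rw [Set.mem_singleton_iff] at hg
    subst hg
    exact (commutatorElement_eq_one_iff_commute.mp
      (theta (hD1N hp) (hD1N hq) (hD1N hw) (hD1N hr))).eq
  have hB : ∀ g ∈ derivedSeries G 2, ∀ t ∈ derivedSeries G 2, Commute g t := by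
    intro g hg t ht
    have h1 : derivedSeries G 2 ≤ Subgroup.centralizer {t} := by
      rw [derivedSeries_succ]
      refine Subgroup.commutator_le.mpr ?_
      intro w hw r hr
      rw [Subgroup.mem_centralizer_iff]
      intro c hc
      rw [Set.mem_singleton_iff] at hc
      subst hc
      have h2 := hA r w hr hw ht
      rw [Subgroup.mem_centralizer_iff] at h2
      exact (h2 ⁅w, r⁆ rfl).symm
    have h3 := h1 hg
    rw [Subgroup.mem_centralizer_iff] at h3
    exact (h3 t rfl).symm
  have : derivedSeries G 3 = ⁅derivedSeries G 2, derivedSeries G 2⁆ :=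
    derivedSeries_succ G 2
  rw [this, eq_bot_iff]
  refine Subgroup.commutator_le.mpr ?_
  intro g hg t ht
  rw [Subgroup.mem_bot]
  exact commutatorElement_eq_one_iff_commute.mpr (hB g hg t ht)
end

section
/- Let G be a finite group satisfying condition (𝒩, 3): every subset of G with 4 elements contains a pair {x, y} such that ⟨x, y⟩ is nilpotent. Then G is nilpotent. -/
open Subgroup

section Aux

variable {G : Type*} [Group G]

/-- Nilpotency passes down along an inclusion of subgroups. -/
private lemma nilpotent_of_le' {K L : Subgroup G} (hKL : K ≤ L)
    (hL : Group.IsNilpotent L) : Group.IsNilpotent K := by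
  haveI := hL
  haveI : Group.IsNilpotent (K.subgroupOf L) := Subgroup.isNilpotent _
  exact nilpotent_of_surjective (Subgroup.subgroupOfEquivOfLe hKL).toMonoidHom
    (MulEquiv.surjective _)

/-- The hard pair `{x*y, x⁻¹*y}` : from both in `K` we recover `x` (odd order) and `y`. -/
private lemma hard_case {K : Subgroup G} {x y : G} (hx : Odd (orderOf x))
    (h1 : x * y ∈ K) (h2 : x⁻¹ * y ∈ K) : x ∈ K ∧ y ∈ K := by
  obtain ⟨m, hm⟩ := hx
  have hx2 : x * x ∈ K := by
    have := mul_mem h1 (inv_mem h2)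
    rwa [show (x * y) * (x⁻¹ * y)⁻¹ = x * x by group] at this
  have key : (x * x) ^ (m + 1) = x := by
    have h1' : x ^ (2 * m + 1) = 1 := by rw [← hm]; exact pow_orderOf_eq_one x
    calc (x * x) ^ (m + 1) = x ^ (2 * (m + 1)) := by rw [← sq, ← pow_mul]
      _ = x ^ (2 * m + 1) * x := by
            rw [show 2 * (m + 1) = (2 * m + 1) + 1 by ring, pow_succ]
      _ = x := by rw [h1', one_mul]
  have hxK : x ∈ K := key ▸ pow_mem hx2 (m + 1)
  exact ⟨hxK, by simpa using mul_mem (inv_mem hxK) h1⟩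

end Aux

section Main

variable {G : Type*} [Group G] [Finite G]

/-- Key lemma: under the (𝒩,3) condition, an element of odd order together with any other
element generates a nilpotent subgroup. -/
private lemma keyA
    (h : ∀ S : Finset G, S.card = 4 → ∃ x ∈ S, ∃ y ∈ S, x ≠ y ∧
      Group.IsNilpotent ↥(Subgroup.closure {x, y}))
    (x y : G) (hx : Odd (orderOf x)) :
    Group.IsNilpotent ↥(Subgroup.closure ({x, y} : Set G)) := by
  classical
  have hle : ∀ K : Subgroup G, x ∈ K → y ∈ K → Group.IsNilpotent K →
      Group.IsNilpotent ↥(Subgroup.closure ({x, y} : Set G)) := by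
    intro K hxK hyK hK
    refine nilpotent_of_le' ?_ hK
    rw [closure_le]
    intro t ht
    rcases ht with rfl | ht
    · exact hxK
    · rwa [Set.mem_singleton_iff.mp ht]
  by_cases h1 : x = 1
  · subst h1
    exact hle (zpowers y) (one_mem _) (mem_zpowers y) (by open IsMulCommutative in infer_instance)
  by_cases h2 : y ∈ zpowers x
  · exact hle (zpowers x) (mem_zpowers x) h2 (by open IsMulCommutative in infer_instance)
  -- distinctness of the four elements
  have d1 : x ≠ y := fun e => h2 (e ▸ mem_zpowers x)
  have d2 : x ≠ x * y := fun e => h2 (by rw [left_eq_mul.mp e]; exact one_mem _)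
  have d3 : x ≠ x⁻¹ * y := fun e => by
    have : x * x = y := (eq_inv_mul_iff_mul_eq).mp e
    exact h2 (this ▸ mul_mem (mem_zpowers x) (mem_zpowers x))
  have d4 : y ≠ x * y := fun e => h1 (right_eq_mul.mp e)
  have d5 : y ≠ x⁻¹ * y := fun e => h1 (inv_eq_one.mp (right_eq_mul.mp e))
  have d6 : x * y ≠ x⁻¹ * y := by
    intro e
    have hxx : x * x = 1 := by
      have h' := mul_right_cancel e
      exact eq_inv_iff_mul_eq_one.mp h'
    have hdvd : orderOf x ∣ 2 := orderOf_dvd_iff_pow_eq_one.mpr (by rwa [pow_two])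
    have : orderOf x = 1 :=
      Nat.Coprime.eq_one_of_dvd (Odd.coprime_two_right hx) hdvd
    exact h1 (orderOf_eq_one_iff.mp this)
  have hS : ({x, y, x * y, x⁻¹ * y} : Finset G).card = 4 := by
    rw [Finset.card_insert_of_notMem (by simp [d1, d2, d3]),
      Finset.card_insert_of_notMem (by simp [d4, d5]),
      Finset.card_insert_of_notMem (by simp [d6]), Finset.card_singleton]
  obtain ⟨a, ha, b, hb, hab, hnil⟩ := h _ hS
  set K := Subgroup.closure ({a, b} : Set G) with hK
  have haK : a ∈ K := subset_closure (Set.mem_insert _ _)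
  have hbK : b ∈ K := subset_closure (Set.mem_insert_of_mem _ rfl)
  suffices hmem : x ∈ K ∧ y ∈ K by exact hle K hmem.1 hmem.2 hnil
  clear hK
  simp only [Finset.mem_insert, Finset.mem_singleton] at ha hb
  rcases ha with rfl | rfl | rfl | rfl <;> rcases hb with rfl | rfl | rfl | rfl
  · exact absurd rfl hab
  · exact ⟨haK, hbK⟩
  · exact ⟨haK, by simpa using mul_mem (inv_mem haK) hbK⟩
  · exact ⟨haK, by simpa using mul_mem haK hbK⟩
  · exact ⟨hbK, haK⟩
  · exact absurd rfl hab
  · exact ⟨by simpa using mul_mem hbK (inv_mem haK), haK⟩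
  · exact ⟨by simpa using inv_mem (mul_mem hbK (inv_mem haK)), haK⟩
  · exact ⟨hbK, by simpa using mul_mem (inv_mem hbK) haK⟩
  · exact ⟨by simpa using mul_mem haK (inv_mem hbK), hbK⟩
  · exact absurd rfl hab
  · exact hard_case hx haK hbK
  · exact ⟨hbK, by simpa using mul_mem hbK haK⟩
  · exact ⟨by simpa using inv_mem (mul_mem haK (inv_mem hbK)), hbK⟩
  · exact hard_case hx hbK haK
  · exact absurd rfl hab

/-- In a finite nilpotent group, elements of coprime prime power orders commute. -/
private lemma commute_of_prime_pow {N : Type*} [Group N] [Finite N]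
    (hN : Group.IsNilpotent N) {p q : ℕ} (hp : p.Prime) (hq : q.Prime) (hpq : p ≠ q)
    {x y : N} (hx : ∃ a, orderOf x = p ^ a) (hy : ∃ b, orderOf y = q ^ b) :
    Commute x y := by
  haveI := hN
  haveI : Fact p.Prime := ⟨hp⟩
  haveI : Fact q.Prime := ⟨hq⟩
  have hsyl : ∀ (r : ℕ) (_ : Fact r.Prime) (P : Sylow r N), (↑P : Subgroup N).Normal :=
    (isNilpotent_of_finite_tfae.out 0 3).mp hN
  obtain ⟨a, ha⟩ := hx
  obtain ⟨b, hb⟩ := hy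
  have hxP : IsPGroup p (Subgroup.zpowers x) :=
    IsPGroup.of_card (by rw [Nat.card_zpowers, ha])
  have hyQ : IsPGroup q (Subgroup.zpowers y) :=
    IsPGroup.of_card (by rw [Nat.card_zpowers, hb])
  obtain ⟨P, hP⟩ := hxP.exists_le_sylow
  obtain ⟨Q, hQ⟩ := hyQ.exists_le_sylow
  have hdis : Disjoint (P : Subgroup N) (Q : Subgroup N) := by
    rw [Subgroup.disjoint_def]
    intro g hgP hgQ
    have h1 : orderOf g ∣ p ^ (Nat.card N).factorization p := by
      have := Subgroup.orderOf_dvd_natCard _ hgP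
      rwa [P.card_eq_multiplicity] at this
    have h2 : orderOf g ∣ q ^ (Nat.card N).factorization q := by
      have := Subgroup.orderOf_dvd_natCard _ hgQ
      rwa [Q.card_eq_multiplicity] at this
    have hco : Nat.Coprime (p ^ (Nat.card N).factorization p)
        (q ^ (Nat.card N).factorization q) :=
      Nat.Coprime.pow _ _ ((Nat.coprime_primes hp hq).mpr hpq)
    have hg1 : orderOf g ∣ 1 := by
      have hgcd := Nat.dvd_gcd h1 h2
      rwa [Nat.Coprime.gcd_eq_one hco] at hgcd
    exact orderOf_eq_one_iff.mp (Nat.dvd_one.mp hg1)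
  exact Subgroup.commute_of_normal_of_disjoint _ _ (hsyl p ‹_› P) (hsyl q ‹_› Q) hdis x y
    (hP (mem_zpowers x)) (hQ (mem_zpowers y))

private lemma commute_aux
    (h : ∀ S : Finset G, S.card = 4 → ∃ x ∈ S, ∃ y ∈ S, x ≠ y ∧
      Group.IsNilpotent ↥(Subgroup.closure {x, y}))
    {p q : ℕ} (hp : p.Prime) (hq : q.Prime) (hpodd : Odd p) (hpq : p ≠ q)
    {x y : G} {a b : ℕ} (hx : orderOf x = p ^ a) (hy : orderOf y = q ^ b) :
    Commute x y := by
  have hxodd : Odd (orderOf x) := hx ▸ hpodd.pow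
  have hnil := keyA h x y hxodd
  have hxK : x ∈ Subgroup.closure ({x, y} : Set G) := subset_closure (by simp)
  have hyK : y ∈ Subgroup.closure ({x, y} : Set G) := subset_closure (by simp)
  have hcomm : Commute (⟨x, hxK⟩ : Subgroup.closure ({x, y} : Set G)) ⟨y, hyK⟩ := by
    refine commute_of_prime_pow hnil hp hq hpq ⟨a, ?_⟩ ⟨b, ?_⟩
    · rw [Subgroup.orderOf_mk, hx]
    · rw [Subgroup.orderOf_mk, hy]
  have := congrArg Subtype.val hcomm
  exact (by simpa using this : x * y = y * x)

/-- Elements of coprime prime power orders commute under the (𝒩,3) condition. -/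
private lemma commuteG
    (h : ∀ S : Finset G, S.card = 4 → ∃ x ∈ S, ∃ y ∈ S, x ≠ y ∧
      Group.IsNilpotent ↥(Subgroup.closure {x, y}))
    {p q : ℕ} (hp : p.Prime) (hq : q.Prime) (hpq : p ≠ q)
    {x y : G} {a b : ℕ} (hx : orderOf x = p ^ a) (hy : orderOf y = q ^ b) :
    Commute x y := by
  rcases hp.eq_two_or_odd' with rfl | hpodd
  · have hqodd : Odd q := hq.odd_of_ne_two fun e => hpq e.symm
    exact (commute_aux h hq hp hqodd (Ne.symm hpq) hy hx).symm
  · exact commute_aux h hp hq hpodd hpq hx hy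

end Main

theorem stmt_18 {G : Type*} [Group G] [Finite G]
    (h : ∀ S : Finset G, S.card = 4 → ∃ x ∈ S, ∃ y ∈ S, x ≠ y ∧
      Group.IsNilpotent ↥(Subgroup.closure {x, y})) :
    Group.IsNilpotent G := by
  apply (isNilpotent_of_finite_tfae.out 3 0).mp
  intro p hp P
  rw [← Subgroup.normalizer_eq_top_iff]
  set N := Subgroup.normalizer ((P : Subgroup G) : Set G) with hN
  have hG0 : Nat.card G ≠ 0 := Nat.card_pos.ne'
  have hN0 : Nat.card N ≠ 0 := Nat.card_pos.ne'
  have hdvd : Nat.card G ∣ Nat.card N := by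
    rw [← Nat.factorization_le_iff_dvd hG0 hN0, Finsupp.le_def]
    intro q
    by_cases hq : q.Prime
    · haveI : Fact q.Prime := ⟨hq⟩
      rw [← Nat.Prime.pow_dvd_iff_le_factorization hq hN0]
      by_cases hqp : q = p
      · subst hqp
        have hcard : Nat.card (P : Subgroup G) = q ^ (Nat.card G).factorization q :=
          P.card_eq_multiplicity
        have := Subgroup.card_dvd_of_le (Subgroup.le_normalizer (H := (P : Subgroup G)))
        rwa [hcard] at this
      · obtain ⟨Q⟩ := (inferInstance : Nonempty (Sylow q G))
        have hcomm : ∀ g ∈ (Q : Subgroup G), ∀ t ∈ (P : Subgroup G), Commute g t := by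
          intro g hg t ht
          have hgo : orderOf g ∣ q ^ (Nat.card G).factorization q := by
            have := Subgroup.orderOf_dvd_natCard _ hg
            rwa [Q.card_eq_multiplicity] at this
          have hto : orderOf t ∣ p ^ (Nat.card G).factorization p := by
            have := Subgroup.orderOf_dvd_natCard _ ht
            rwa [P.card_eq_multiplicity] at this
          obtain ⟨a, _, hga⟩ := (Nat.dvd_prime_pow hq).mp hgo
          obtain ⟨b, _, htb⟩ := (Nat.dvd_prime_pow hp.out).mp hto
          exact commuteG h hq hp.out hqp hga htb
        have hQN : (Q : Subgroup G) ≤ N := by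
          intro g hg
          rw [hN, Subgroup.mem_normalizer_iff]
          intro t
          constructor
          · intro ht
            have hc := hcomm g hg t ht
            have e : g * t * g⁻¹ = t := by rw [hc.eq]; exact mul_inv_cancel_right t g
            rwa [e]
          · intro ht
            have hc := (hcomm g hg (g * t * g⁻¹) ht).inv_left
            have e : t = g⁻¹ * (g * t * g⁻¹) * g := by group
            rw [e, hc.eq]
            have e2 : g * t * g⁻¹ * g⁻¹ * g = g * t * g⁻¹ := by group
            rwa [e2]
        have := Subgroup.card_dvd_of_le hQN
        rwa [Q.card_eq_multiplicity] at this
    · simp [Nat.factorization_eq_zero_of_not_prime _ hq]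
  exact Subgroup.eq_top_of_card_eq _ (Nat.dvd_antisymm (Subgroup.card_subgroup_dvd_card N) hdvd)
end
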